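/- arXiv:math/0107076 — 6 statements merged into one kernel-verified Lean document; each statement's English description precedes it below -/
import Mathlib

section
/- For every k ≥ 2, the unital subalgebra of the group algebra ℂ[F_k] generated by w_1 equals the linear span of {w_n : n ≥ 0}; in particular each w_n lies in the unital subalgebra generated by w_1. -/
set_option maxHeartbeats 1000000


/-!
Common setup: `Fk k` is the free group `F_k` on `k` generators; letters of the
alphabet `S_k = {g_1,…,g_k,g_1⁻¹,…,g_k⁻¹}` are encoded as pairs in `Fin k × Bool`
(`(i, true)` is `g_{i+1}`, `(i, false)` is `g_{i+1}⁻¹`); `wlen u` is the length of the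
unique reduced word representing `u`; `words k n` is the (finite) set of elements of
length `n`; `w k n` is `w_n`, the sum of all reduced words of length `n` in the group
algebra `ℂ[F_k] = MonoidAlgebra ℂ (Fk k)`.
-/

open scoped BigOperators

noncomputable section

abbrev Fk (k : ℕ) := FreeGroup (Fin k)

/-- The length `|u|` of the unique reduced word representing `u`. -/
def wlen {k : ℕ} (u : Fk k) : ℕ := (FreeGroup.toWord u).length

/-- The `Finset` of all elements of `F_k` whose reduced word has length `n`,
realized as the images of the reduced lists of letters of length `n`. -/
def words (k n : ℕ) : Finset (Fk k) :=
  (Finset.univ.filter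
      (fun v : List.Vector (Fin k × Bool) n => FreeGroup.reduce v.toList = v.toList)).image
    (fun v => FreeGroup.mk v.toList)

/-- `w_n`: the sum of all reduced words of length `n` in the group algebra `ℂ[F_k]`. -/
def w (k n : ℕ) : MonoidAlgebra ℂ (Fk k) :=
  ∑ u ∈ words k n, MonoidAlgebra.of ℂ (Fk k) u

/-- The first letter of the reduced word representing `u` (if any). -/
def firstLetter {k : ℕ} (u : Fk k) : Option (Fin k × Bool) := (FreeGroup.toWord u).head?

/-- The last letter of the reduced word representing `u` (if any). -/
def lastLetter {k : ℕ} (u : Fk k) : Option (Fin k × Bool) := (FreeGroup.toWord u).getLast?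

/-- The inverse of a letter. -/
def linv {k : ℕ} (a : Fin k × Bool) : Fin k × Bool := (a.1, !a.2)

/-- The set of reduced words of length `n` beginning with the letter `x` and ending with
the letter `y`. -/
def wordsXY (k n : ℕ) (x y : Fin k × Bool) : Finset (Fk k) :=
  (words k n).filter (fun u => firstLetter u = some x ∧ lastLetter u = some y)

/-- `ν_n(x,y)`: the number of reduced words of length `n` beginning with `x`, ending with `y`. -/
def nu (k n : ℕ) (x y : Fin k × Bool) : ℕ := (wordsXY k n x y).card

/-- `w_n(x,y)`: the sum of all reduced words of length `n` beginning with `x` and ending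
with `y`, in `ℂ[F_k]`. -/
def wXY (k n : ℕ) (x y : Fin k × Bool) : MonoidAlgebra ℂ (Fk k) :=
  ∑ u ∈ wordsXY k n x y, MonoidAlgebra.of ℂ (Fk k) u

/-- `ν_n(σ,τ)`: the number of reduced words of length `n` whose first letter lies in `σ`
and whose last letter lies in `τ`. -/
def nuS (k n : ℕ) (σ τ : Finset (Fin k × Bool)) : ℕ :=
  ((words k n).filter
    (fun u => (∃ a ∈ σ, firstLetter u = some a) ∧ (∃ b ∈ τ, lastLetter u = some b))).card

/-- The inner product `⟨a,b⟩ = Σ_g a_g conj(b_g)` on a group algebra. -/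
def inn {Γ : Type*} [Group Γ] (a b : MonoidAlgebra ℂ Γ) : ℂ :=
  ∑ g ∈ a.coeff.support, a.coeff g * (starRingEnd ℂ) (b.coeff g)

/-- `‖a‖₂² = ⟨a,a⟩ = Σ_g |a_g|²`. -/
def n2sq {Γ : Type*} [Group Γ] (a : MonoidAlgebra ℂ Γ) : ℝ :=
  ∑ g ∈ a.coeff.support, Complex.normSq (a.coeff g)

/-- `‖a‖₂ = ⟨a,a⟩^{1/2}`. -/
def n2 {Γ : Type*} [Group Γ] (a : MonoidAlgebra ℂ Γ) : ℝ := Real.sqrt (n2sq a)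

/-- The conditional expectation onto the Laplacian masa, restricted to `ℂ[F_k]`:
`E(a) = Σ_{n ≥ 0} (⟨a,w_n⟩ / ‖w_n‖₂²) w_n` (a finite sum for each `a`). -/
def Ee {k : ℕ} (a : MonoidAlgebra ℂ (Fk k)) : MonoidAlgebra ℂ (Fk k) :=
  ∑ᶠ n : ℕ, (inn a (w k n) / (n2sq (w k n) : ℂ)) • w k n


namespace FGAux
open FreeGroup
variable {α : Type*} [DecidableEq α]

theorem reduce_tail {b : α × Bool} {t : List (α × Bool)} (h : reduce (b :: t) = b :: t) :
    reduce t = t := by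
  rcases hr : reduce t with _ | ⟨c, s⟩
  · rw [reduce.cons, hr] at h
    change [b] = b :: t at h
    simp only [List.cons.injEq] at h
    rw [← h.2]
  · rw [reduce.cons, hr] at h
    change (if b.1 = c.1 ∧ b.2 = !c.2 then s else b :: c :: s) = b :: t at h
    split_ifs at h with hc
    · have h1 : s.length + 1 ≤ t.length := by
        have := (reduce.red (L := t)).length_le
        rw [hr] at this; simpa using this
      rw [h] at h1; simp at h1
    · rw [List.cons.injEq] at h
      exact h.2

theorem reduce_cons_cancel {a b : α × Bool} {t : List (α × Bool)}
    (h : reduce (b :: t) = b :: t) (hc : b = (a.1, !a.2)) :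
    reduce (a :: b :: t) = t := by
  rw [reduce.cons, h, hc]
  simp

theorem reduce_cons_nocancel {a b : α × Bool} {t : List (α × Bool)}
    (h : reduce (b :: t) = b :: t) (hc : b ≠ (a.1, !a.2)) :
    reduce (a :: b :: t) = a :: b :: t := by
  rw [reduce.cons, h]
  have : ¬ (a.1 = b.1 ∧ a.2 = !b.2) := by
    rintro ⟨h1, h2⟩; exact hc (by cases a; cases b; simp_all)
  change (if a.1 = b.1 ∧ a.2 = !b.2 then t else a :: b :: t) = _
  simp [this]

theorem reduced_cons_iff {a b : α × Bool} {t : List (α × Bool)} :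
    reduce (a :: b :: t) = a :: b :: t ↔ reduce (b :: t) = b :: t ∧ b ≠ (a.1, !a.2) := by
  constructor
  · intro h
    have ht : reduce (b :: t) = b :: t := reduce_tail h
    refine ⟨ht, fun hc => ?_⟩
    rw [reduce_cons_cancel ht hc] at h
    exact absurd (congrArg List.length h) (by simp; omega)
  · rintro ⟨h1, h2⟩; exact reduce_cons_nocancel h1 h2

theorem mul_mk_nocancel {a b : α × Bool} {t : List (α × Bool)}
    (h : reduce (b :: t) = b :: t) (hb : b ≠ (a.1, !a.2)) :
    toWord (FreeGroup.mk [a] * FreeGroup.mk (b :: t)) = a :: b :: t := by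
  rw [mul_mk, List.singleton_append, toWord_mk]
  exact reduce_cons_nocancel h hb

theorem mul_mk_cancel {a : α × Bool} {t : List (α × Bool)}
    (h : reduce ((a.1, !a.2) :: t) = (a.1, !a.2) :: t) :
    FreeGroup.mk [a] * FreeGroup.mk ((a.1, !a.2) :: t) = FreeGroup.mk t := by
  rw [mul_mk, List.singleton_append]
  exact reduce.exact (by rw [reduce_cons_cancel h rfl, reduce_tail h])

end FGAux

namespace AW
open FreeGroup Finset

variable {k : ℕ}

theorem mem_words {n : ℕ} {u : Fk k} : u ∈ words k n ↔ (toWord u).length = n := by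
  constructor
  · intro h
    simp only [words, Finset.mem_image, Finset.mem_filter] at h
    obtain ⟨v, ⟨-, hv⟩, rfl⟩ := h
    rw [toWord_mk, hv]
    exact v.2
  · intro h
    simp only [words, Finset.mem_image, Finset.mem_filter]
    exact ⟨⟨toWord u, h⟩, ⟨Finset.mem_univ _, by simpa using reduce_toWord u⟩,
      by simpa using mk_toWord⟩

theorem words_zero : words k 0 = {1} := by
  ext u
  simp [mem_words, List.length_eq_zero_iff, toWord_eq_nil_iff]

theorem w_zero : w k 0 = 1 := by
  rw [w, words_zero, Finset.sum_singleton]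
  exact (MonoidAlgebra.of ℂ (Fk k)).map_one

theorem mk_single_inj : Function.Injective (fun a : Fin k × Bool => FreeGroup.mk [a]) := by
  intro a b h
  have := congrArg toWord h
  simpa [toWord_mk, reduce_singleton] using this

theorem words_one : words k 1 = Finset.univ.image (fun a : Fin k × Bool => FreeGroup.mk [a]) := by
  ext u
  simp only [mem_words, Finset.mem_image, Finset.mem_univ, true_and]
  constructor
  · intro h
    rcases hl : toWord u with _ | ⟨a, t⟩
    · rw [hl] at h; simp at h
    · rw [hl] at h
      have ht : t = [] := by simpa using h
      refine ⟨a, ?_⟩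
      conv_rhs => rw [← mk_toWord (x := u), hl, ht]
  · rintro ⟨a, rfl⟩
    rw [toWord_mk, reduce_singleton]
    rfl

theorem w_one_sum : w k 1 = ∑ a : Fin k × Bool, MonoidAlgebra.of ℂ (Fk k) (FreeGroup.mk [a]) := by
  rw [w, words_one, Finset.sum_image (fun a _ b _ h => mk_single_inj h)]

theorem good_sum (n : ℕ) (hn : 1 ≤ n) :
    ∑ p ∈ (Finset.univ ×ˢ words k n).filter
        (fun p : (Fin k × Bool) × Fk k => ¬ (toWord p.2).head? = some (p.1.1, !p.1.2)),
      MonoidAlgebra.of ℂ (Fk k) (FreeGroup.mk [p.1] * p.2)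
    = w k (n + 1) := by
  rw [w]
  refine Finset.sum_bij (fun p _ => FreeGroup.mk [p.1] * p.2) ?_ ?_ ?_ ?_
  · rintro ⟨a, u⟩ hp
    simp only [Finset.mem_filter, Finset.mem_product, Finset.mem_univ, true_and] at hp
    obtain ⟨hu, hgood⟩ := hp
    rw [mem_words] at hu
    rcases hl : toWord u with _ | ⟨b, t⟩
    · rw [hl] at hu; simp at hu; omega
    · have hred : reduce (b :: t) = b :: t := by rw [← hl]; exact reduce_toWord u
      have hb : b ≠ (a.1, !a.2) := by
        intro hb; rw [hl, hb] at hgood; simp at hgood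
      have hmem : FreeGroup.mk [a] * u ∈ words k (n + 1) := by
        rw [mem_words, show u = FreeGroup.mk (b :: t) by rw [← hl, mk_toWord],
          FGAux.mul_mk_nocancel hred hb]
        rw [hl] at hu
        simpa using hu
      exact hmem
  · rintro ⟨a, u⟩ hp ⟨a', u'⟩ hp' heq
    simp only [Finset.mem_filter, Finset.mem_product, Finset.mem_univ, true_and] at hp hp'
    obtain ⟨hu, hgood⟩ := hp
    obtain ⟨hu', hgood'⟩ := hp'
    rw [mem_words] at hu hu'
    rcases hl : toWord u with _ | ⟨b, t⟩
    · rw [hl] at hu; simp at hu; omega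
    rcases hl' : toWord u' with _ | ⟨b', t'⟩
    · rw [hl'] at hu'; simp at hu'; omega
    have hred : reduce (b :: t) = b :: t := by rw [← hl]; exact reduce_toWord u
    have hred' : reduce (b' :: t') = b' :: t' := by rw [← hl']; exact reduce_toWord u'
    have hb : b ≠ (a.1, !a.2) := by
      intro hb; rw [hl, hb] at hgood; simp at hgood
    have hb' : b' ≠ (a'.1, !a'.2) := by
      intro hb; rw [hl', hb] at hgood'; simp at hgood'
    have heq2 : toWord (FreeGroup.mk [a] * u) = toWord (FreeGroup.mk [a'] * u') :=
      congrArg toWord heq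
    rw [show u = FreeGroup.mk (b :: t) by rw [← hl, mk_toWord],
        show u' = FreeGroup.mk (b' :: t') by rw [← hl', mk_toWord]] at heq2
    rw [FGAux.mul_mk_nocancel hred hb, FGAux.mul_mk_nocancel hred' hb'] at heq2
    simp only [List.cons.injEq] at heq2
    have huu : u = u' := toWord_injective (by rw [hl, hl', heq2.2.1, heq2.2.2])
    simp [Prod.ext_iff, heq2.1, huu]
  · intro v hv
    rw [mem_words] at hv
    rcases hl : toWord v with _ | ⟨a, l⟩
    · rw [hl] at hv; simp at hv
    rcases l with _ | ⟨b, t⟩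
    · rw [hl] at hv; simp at hv; omega
    have hred : reduce (a :: b :: t) = a :: b :: t := by rw [← hl]; exact reduce_toWord v
    obtain ⟨hred2, hb⟩ := FGAux.reduced_cons_iff.mp hred
    have hmem : ((a, FreeGroup.mk (b :: t)) : (Fin k × Bool) × Fk k) ∈
        (Finset.univ ×ˢ words k n).filter
          (fun p : (Fin k × Bool) × Fk k => ¬ (toWord p.2).head? = some (p.1.1, !p.1.2)) := by
      simp only [Finset.mem_filter, Finset.mem_product, Finset.mem_univ, true_and]
      constructor
      · rw [mem_words, toWord_mk, hred2]
        rw [hl] at hv; simpa using hv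
      · rw [toWord_mk, hred2]
        simpa using hb
    refine ⟨(a, FreeGroup.mk (b :: t)), hmem, ?_⟩
    have hcomp : FreeGroup.mk [a] * FreeGroup.mk (b :: t) = FreeGroup.mk (a :: b :: t) := by
      rw [mul_mk]; rfl
    show FreeGroup.mk [a] * FreeGroup.mk (b :: t) = v
    rw [hcomp, ← hl, mk_toWord]
  · intro p hp
    rfl

theorem bad_sum (n : ℕ) (hn : 1 ≤ n) (hk : 1 ≤ k) :
    ∑ p ∈ (Finset.univ ×ˢ words k n).filter
        (fun p : (Fin k × Bool) × Fk k => (toWord p.2).head? = some (p.1.1, !p.1.2)),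
      MonoidAlgebra.of ℂ (Fk k) (FreeGroup.mk [p.1] * p.2)
    = (2 * k - 1 + if n = 1 then 1 else 0) • w k (n - 1) := by
  classical
  set s := (Finset.univ ×ˢ words k n).filter
      (fun p : (Fin k × Bool) × Fk k => (toWord p.2).head? = some (p.1.1, !p.1.2)) with hs
  -- every element of s has the form (a, mk ((a.1,!a.2) :: toWord v)) with v = mk of the tail
  have hstruct : ∀ p ∈ s, ∃ t : List (Fin k × Bool), toWord p.2 = (p.1.1, !p.1.2) :: t ∧
      (toWord p.2).length = n := by
    rintro ⟨a, u⟩ hp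
    simp only [hs, Finset.mem_filter, Finset.mem_product, Finset.mem_univ, true_and] at hp
    obtain ⟨hu, hhead⟩ := hp
    rw [mem_words] at hu
    rcases hl : toWord u with _ | ⟨b, t⟩
    · rw [hl] at hhead; simp at hhead
    · rw [hl] at hhead
      simp only [List.head?_cons, Option.some.injEq] at hhead
      refine ⟨t, by simp [hhead], by rw [hl] at hu; exact hu⟩
  have hmaps : ∀ p ∈ s, FreeGroup.mk ((toWord p.2).tail) ∈ words k (n - 1) := by
    intro p hp
    obtain ⟨t, hl, hlen⟩ := hstruct p hp
    have hred : reduce t = t :=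
      FGAux.reduce_tail (by rw [← hl]; exact reduce_toWord p.2)
    rw [hl]
    simp only [List.tail_cons]
    rw [mem_words, toWord_mk, hred]
    rw [hl] at hlen
    simp at hlen
    omega
  rw [← Finset.sum_fiberwise_of_maps_to hmaps
    (fun p => MonoidAlgebra.of ℂ (Fk k) (FreeGroup.mk [p.1] * p.2))]
  rw [w, Finset.smul_sum]
  refine Finset.sum_congr rfl (fun v hv => ?_)
  have hvlen : (toWord v).length = n - 1 := mem_words.mp hv
  -- each term in the fiber equals `of v`
  have hterm : ∀ p ∈ s.filter (fun p => FreeGroup.mk ((toWord p.2).tail) = v),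
      MonoidAlgebra.of ℂ (Fk k) (FreeGroup.mk [p.1] * p.2) = MonoidAlgebra.of ℂ (Fk k) v := by
    rintro ⟨a, u⟩ hp
    rw [Finset.mem_filter] at hp
    obtain ⟨hps, hgv⟩ := hp
    obtain ⟨t, hl, hlen⟩ := hstruct (a, u) hps
    have hred : reduce ((a.1, !a.2) :: t) = (a.1, !a.2) :: t := by
      rw [← hl]; exact reduce_toWord u
    have hprod : FreeGroup.mk [a] * u = FreeGroup.mk t := by
      conv_lhs => rw [show u = FreeGroup.mk ((a.1, !a.2) :: t) by rw [← hl, mk_toWord]]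
      exact FGAux.mul_mk_cancel hred
    have hgv' : FreeGroup.mk t = v := by
      rw [hl] at hgv; simpa using hgv
    rw [hprod, hgv']
  rw [Finset.sum_congr rfl hterm, Finset.sum_const]
  congr 1
  -- now count the fiber
  have hcard : (s.filter (fun p => FreeGroup.mk ((toWord p.2).tail) = v)).card =
      (Finset.univ.filter (fun a : Fin k × Bool => ¬ (toWord v).head? = some a)).card := by
    refine Finset.card_bij (fun p _ => p.1) ?_ ?_ ?_
    · rintro ⟨a, u⟩ hp
      rw [Finset.mem_filter] at hp
      obtain ⟨hps, hgv⟩ := hp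
      obtain ⟨t, hl, hlen⟩ := hstruct (a, u) hps
      have hred : reduce ((a.1, !a.2) :: t) = (a.1, !a.2) :: t := by
        rw [← hl]; exact reduce_toWord u
      have hredt : reduce t = t := FGAux.reduce_tail hred
      have htv : toWord v = t := by
        rw [hl] at hgv
        simp only [List.tail_cons] at hgv
        rw [← hgv, toWord_mk, hredt]
      simp only [Finset.mem_filter, Finset.mem_univ, true_and, htv]
      rcases t with _ | ⟨c, sl⟩
      · simp
      · simp only [List.head?_cons, Option.some.injEq]
        intro hca
        obtain ⟨-, hc⟩ := FGAux.reduced_cons_iff.mp hred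
        apply hc
        rw [hca]
        simp
    · rintro ⟨a, u⟩ hp ⟨a', u'⟩ hp' heq
      simp only at heq
      subst heq
      rw [Finset.mem_filter] at hp hp'
      obtain ⟨hps, hgv⟩ := hp
      obtain ⟨hps', hgv'⟩ := hp'
      obtain ⟨t, hl, -⟩ := hstruct (a, u) hps
      obtain ⟨t', hl', -⟩ := hstruct (a, u') hps'
      have hredt : reduce t = t :=
        FGAux.reduce_tail (show reduce ((a.1, !a.2) :: t) = _ by rw [← hl]; exact reduce_toWord u)
      have hredt' : reduce t' = t' :=
        FGAux.reduce_tail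
          (show reduce ((a.1, !a.2) :: t') = _ by rw [← hl']; exact reduce_toWord u')
      have ht : t = toWord v := by
        rw [hl] at hgv; simp only [List.tail_cons] at hgv
        rw [← hgv, toWord_mk, hredt]
      have ht' : t' = toWord v := by
        rw [hl'] at hgv'; simp only [List.tail_cons] at hgv'
        rw [← hgv', toWord_mk, hredt']
      have : u = u' := toWord_injective (by rw [hl, hl', ht, ht'])
      rw [this]
    · intro a ha
      simp only [Finset.mem_filter, Finset.mem_univ, true_and] at ha
      have hred : reduce ((a.1, !a.2) :: toWord v) = (a.1, !a.2) :: toWord v := by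
        rcases hlv : toWord v with _ | ⟨c, sl⟩
        · exact reduce_singleton _
        · refine FGAux.reduced_cons_iff.mpr ⟨by rw [← hlv]; exact reduce_toWord v, ?_⟩
          intro hc
          apply ha
          rw [hlv, hc]
          simp
      refine ⟨(a, FreeGroup.mk ((a.1, !a.2) :: toWord v)), ?_, rfl⟩
      rw [Finset.mem_filter]
      constructor
      · simp only [hs, Finset.mem_filter, Finset.mem_product, Finset.mem_univ, true_and]
        constructor
        · rw [mem_words, toWord_mk, hred]
          simp [hvlen]
          omega
        · rw [toWord_mk, hred]
          simp
      · rw [toWord_mk, hred]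
        simp only [List.tail_cons]
        exact mk_toWord
  rw [hcard]
  -- compute the cardinality of the allowed-letter set
  by_cases h1 : n = 1
  · have hv0 : toWord v = [] := by
      have h0 : (toWord v).length = 0 := by omega
      exact List.length_eq_zero_iff.mp h0
    have hfull : (Finset.univ.filter (fun a : Fin k × Bool => ¬ (toWord v).head? = some a)) =
        Finset.univ := by
      ext a
      simp [hv0]
    rw [hfull, Finset.card_univ, if_pos h1]
    have hcard2 : Fintype.card (Fin k × Bool) = 2 * k := by
      rw [Fintype.card_prod, Fintype.card_fin, Fintype.card_bool]; omega
    rw [hcard2]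
    omega
  · have hpos : 1 ≤ (toWord v).length := by omega
    rcases hlv : toWord v with _ | ⟨c, sl⟩
    · rw [hlv] at hpos; exact absurd hpos (by simp)
    have herase : (Finset.univ.filter (fun a : Fin k × Bool => ¬ (c :: sl).head? = some a)) =
        Finset.univ.erase c := by
      ext a
      simp [eq_comm]
    rw [herase, Finset.card_erase_of_mem (Finset.mem_univ _), Finset.card_univ, if_neg h1]
    have hcard2 : Fintype.card (Fin k × Bool) = 2 * k := by
      rw [Fintype.card_prod, Fintype.card_fin, Fintype.card_bool]; omega
    rw [hcard2]
    omega

theorem key (n : ℕ) (hn : 1 ≤ n) (hk : 1 ≤ k) :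
    w k 1 * w k n = w k (n + 1) + (2 * k - 1 + if n = 1 then 1 else 0) • w k (n - 1) := by
  classical
  rw [w_one_sum, w, Finset.sum_mul_sum]
  have hmm : ∀ (a : Fin k × Bool) (u : Fk k),
      MonoidAlgebra.of ℂ (Fk k) (FreeGroup.mk [a]) * MonoidAlgebra.of ℂ (Fk k) u =
      MonoidAlgebra.of ℂ (Fk k) (FreeGroup.mk [a] * u) := fun a u => (_root_.map_mul (MonoidAlgebra.of ℂ (Fk k)) _ _).symm
  simp only [hmm]
  rw [show (∑ a : Fin k × Bool, ∑ u ∈ words k n,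
        MonoidAlgebra.of ℂ (Fk k) (FreeGroup.mk [a] * u)) =
      ∑ p ∈ Finset.univ ×ˢ words k n,
        MonoidAlgebra.of ℂ (Fk k) (FreeGroup.mk [p.1] * p.2) from
    (Finset.sum_product Finset.univ (words k n)
      (fun p => MonoidAlgebra.of ℂ (Fk k) (FreeGroup.mk [p.1] * p.2))).symm]
  rw [← Finset.sum_filter_add_sum_filter_not (Finset.univ ×ˢ words k n)
    (fun p : (Fin k × Bool) × Fk k => (toWord p.2).head? = some (p.1.1, !p.1.2))]
  rw [bad_sum n hn hk, good_sum n hn, add_comm]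

theorem w_mem (hk : 1 ≤ k) (n : ℕ) : w k n ∈ Algebra.adjoin ℂ {w k 1} := by
  have H : ∀ m : ℕ, w k m ∈ Algebra.adjoin ℂ {w k 1} ∧
      w k (m + 1) ∈ Algebra.adjoin ℂ {w k 1} := by
    intro m
    induction m with
    | zero =>
      exact ⟨by rw [w_zero]; exact one_mem _, Algebra.subset_adjoin rfl⟩
    | succ m ih =>
      refine ⟨ih.2, ?_⟩
      have hkey := key (m + 1) (by omega) hk
      have heq : w k (m + 1 + 1) = w k 1 * w k (m + 1) -
          (2 * k - 1 + if m + 1 = 1 then 1 else 0) • w k (m + 1 - 1) := by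
        rw [hkey, add_sub_cancel_right]
      rw [heq]
      exact sub_mem (mul_mem (Algebra.subset_adjoin rfl) ih.2)
        (nsmul_mem (by simpa using ih.1) _)
  exact (H n).1

theorem w1_mul_mem_span (hk : 1 ≤ k) (n : ℕ) :
    w k 1 * w k n ∈ Submodule.span ℂ (Set.range (w k)) := by
  cases n with
  | zero =>
    rw [w_zero, mul_one]
    exact Submodule.subset_span (Set.mem_range_self 1)
  | succ m =>
    rw [key (m + 1) (by omega) hk]
    exact add_mem (Submodule.subset_span (Set.mem_range_self (m + 2)))
      (nsmul_mem (Submodule.subset_span (Set.mem_range_self (m + 1 - 1))) _)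

theorem pow_mem_span (hk : 1 ≤ k) (m : ℕ) :
    w k 1 ^ m ∈ Submodule.span ℂ (Set.range (w k)) := by
  induction m with
  | zero =>
    rw [pow_zero, ← w_zero]
    exact Submodule.subset_span (Set.mem_range_self 0)
  | succ m ih =>
    rw [pow_succ']
    have hle : Submodule.span ℂ (Set.range (w k)) ≤
        Submodule.comap (LinearMap.mulLeft ℂ (w k 1)) (Submodule.span ℂ (Set.range (w k))) := by
      rw [Submodule.span_le]
      rintro _ ⟨n, rfl⟩
      exact w1_mul_mem_span hk n
    exact hle ih

end AW

/-- for `k ≥ 2`, the unital subalgebra of `ℂ[F_k]` generated by `w_1` equals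
the linear span of `{w_n : n ≥ 0}`; in particular each `w_n` lies in the unital
subalgebra generated by `w_1`. -/
theorem adjoin_w_one_eq_span (k : ℕ) (hk : 2 ≤ k) :
    Subalgebra.toSubmodule (Algebra.adjoin ℂ {w k 1}) =
      Submodule.span ℂ (Set.range (w k)) ∧
    ∀ n : ℕ, w k n ∈ Algebra.adjoin ℂ {w k 1} := by
  have h2 : ∀ n : ℕ, w k n ∈ Algebra.adjoin ℂ {w k 1} := AW.w_mem (by omega)
  refine ⟨le_antisymm ?_ ?_, h2⟩
  · rw [Algebra.adjoin_eq_span, Submodule.span_le]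
    intro x hx
    obtain ⟨m, rfl⟩ := Submonoid.mem_closure_singleton.mp hx
    exact AW.pow_mem_span (by omega) m
  · rw [Submodule.span_le]
    rintro _ ⟨n, rfl⟩
    simpa using h2 n

end
end

section
/- For every k ≥ 2 and every n ≥ 2: β_n = γ_n + 1 and α_n = γ_n + (1 + (−1)^n)/2 (i.e. α_n = γ_n + 1 if n is even and α_n = γ_n if n is odd); in particular |α_n − γ_n| ≤ 1 and |α_n − β_n| ≤ 2. -/
/-!
Common setup: `Fk k` is the free group `F_k` on `k` generators; letters of the
alphabet `S_k = {g_1,…,g_k,g_1⁻¹,…,g_k⁻¹}` are encoded as pairs in `Fin k × Bool`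
(`(i, true)` is `g_{i+1}`, `(i, false)` is `g_{i+1}⁻¹`); `wlen u` is the length of the
unique reduced word representing `u`; `words k n` is the (finite) set of elements of
length `n`; `w k n` is `w_n`, the sum of all reduced words of length `n` in the group
algebra `ℂ[F_k] = MonoidAlgebra ℂ (Fk k)`.
-/

open scoped BigOperators

noncomputable section

/-- `α_n = ν_n(g₁,g₂)`. -/
def alph (k n : ℕ) (hk : 2 ≤ k) : ℕ :=
  nu k n ((⟨0, by omega⟩ : Fin k), true) ((⟨1, by omega⟩ : Fin k), true)

/-- `β_n = ν_n(g₁,g₁)`. -/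
def bet (k n : ℕ) (hk : 2 ≤ k) : ℕ :=
  nu k n ((⟨0, by omega⟩ : Fin k), true) ((⟨0, by omega⟩ : Fin k), true)

/-- `γ_n = ν_n(g₁,g₁⁻¹)`. -/
def gam (k n : ℕ) (hk : 2 ≤ k) : ℕ :=
  nu k n ((⟨0, by omega⟩ : Fin k), true) ((⟨0, by omega⟩ : Fin k), false)

open List in
theorem reduce_eq_self_iff {α : Type*} [DecidableEq α] (L : List (α × Bool)) :
    FreeGroup.reduce L = L ↔ List.IsChain (fun a b => ¬(a.1 = b.1 ∧ a.2 = !b.2)) L := by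
  induction L with
  | nil => simp
  | cons x L ih =>
    constructor
    · intro h
      rw [FreeGroup.reduce.cons] at h
      rcases hr : FreeGroup.reduce L with _ | ⟨hd, tl⟩
      · rw [hr] at h
        dsimp only at h
        obtain rfl : L = [] := by simpa using h.symm
        simp
      · rw [hr] at h
        dsimp only at h
        by_cases hc : x.1 = hd.1 ∧ x.2 = !hd.2
        · rw [if_pos hc] at h
          have h1 : tl.length + 2 ≤ L.length + 1 := by
            have := FreeGroup.Red.length_le (FreeGroup.reduce.red (L := L))
            rw [hr] at this; simp at this; omega
          have : tl.length = L.length + 1 := by rw [h]; simp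
          omega
        · rw [if_neg hc] at h
          have hL : L = hd :: tl := by simpa using h.symm
          have : FreeGroup.reduce L = L := by rw [hr, hL]
          rw [List.isChain_cons]
          refine ⟨?_, ih.mp this⟩
          intro y hy
          rw [hL] at hy; simp at hy; subst hy; exact hc
    · intro h
      have hL : FreeGroup.reduce L = L := ih.mpr h.tail
      rw [FreeGroup.reduce.cons, hL]
      cases L with
      | nil => rfl
      | cons hd tl =>
        simp only
        rw [if_neg]
        exact (List.isChain_cons_cons.mp h).1

section auxsec
open List Finset
section lists
variable {k : ℕ}

def lset (k n : ℕ) : Finset (List (Fin k × Bool)) :=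
  (Finset.univ : Finset (List.Vector (Fin k × Bool) n)).image List.Vector.toList

lemma mem_lset {n : ℕ} {L : List (Fin k × Bool)} : L ∈ lset k n ↔ L.length = n := by
  simp only [lset, Finset.mem_image, Finset.mem_univ, true_and]
  constructor
  · rintro ⟨v, rfl⟩; exact v.toList_length
  · intro h; exact ⟨⟨L, h⟩, rfl⟩

def Rch (L : List (Fin k × Bool)) : Prop :=
  List.IsChain (fun a b => ¬(a.1 = b.1 ∧ a.2 = !b.2)) L

instance : DecidablePred (Rch (k := k)) := fun L => Classical.dec _

def Axy (k n : ℕ) (x y : Fin k × Bool) : Finset (List (Fin k × Bool)) :=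
  (lset k n).filter (fun L => Rch L ∧ L.head? = some x ∧ L.getLast? = some y)

def Bx (k n : ℕ) (x : Fin k × Bool) : Finset (List (Fin k × Bool)) :=
  (lset k n).filter (fun L => Rch L ∧ L.head? = some x)

lemma nu_eq_card (n : ℕ) (x y : Fin k × Bool) : nu k n x y = (Axy k n x y).card := by
  classical
  unfold nu wordsXY words
  rw [Finset.filter_image]
  rw [Finset.card_image_of_injOn]
  · unfold Axy
    rw [lset, Finset.filter_image, Finset.card_image_of_injOn, Finset.filter_filter]
    · congr 1
      apply Finset.filter_congr
      intro v _
      have h1 : firstLetter (FreeGroup.mk v.toList) = (FreeGroup.reduce v.toList).head? := by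
        simp [firstLetter, FreeGroup.toWord_mk]
      have h2 : lastLetter (FreeGroup.mk v.toList) = (FreeGroup.reduce v.toList).getLast? := by
        simp [lastLetter, FreeGroup.toWord_mk]
      simp only [h1, h2, Rch, ← reduce_eq_self_iff]
      constructor
      · rintro ⟨hr, h⟩; rw [hr] at h; exact ⟨hr, h⟩
      · rintro ⟨hr, h⟩; rw [← hr] at h; exact ⟨hr, h⟩
    · intro a _ b _ hab
      exact List.Vector.toList_injective hab
  · intro a ha b hb hab
    simp only [Finset.mem_coe, Finset.mem_filter] at ha hb
    have h := congrArg FreeGroup.toWord hab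
    simp only [FreeGroup.toWord_mk, ha.1.2, hb.1.2] at h
    exact List.Vector.toList_injective h

end lists

section lists2
variable {k : ℕ}

lemma Bx_split (n : ℕ) (x z : Fin k × Bool) :
    (Bx k n x).filter (fun L => L.getLast? = some z) = Axy k n x z := by
  unfold Bx Axy
  rw [Finset.filter_filter]
  apply Finset.filter_congr
  intro L _
  tauto

lemma rec_card (n : ℕ) (hn : 1 ≤ n) (x y : Fin k × Bool) :
    (Axy k (n+1) x y).card + (Axy k n x (y.1, !y.2)).card = (Bx k n x).card := by
  have h1 : ((Bx k n x).filter (fun L => ¬ L.getLast? = some (y.1, !y.2))).card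
      = (Axy k (n+1) x y).card := by
    apply Finset.card_bij (fun L _ => L ++ [y])
    · intro L hL
      simp only [Finset.mem_filter, Bx, mem_lset] at hL
      obtain ⟨⟨hlen, hch, hhd⟩, hlast⟩ := hL
      simp only [Axy, Finset.mem_filter, mem_lset]
      refine ⟨by simp [hlen], ?_, ?_, List.getLast?_concat⟩
      · -- Rch (L ++ [y])
        rw [Rch, List.isChain_append]
        refine ⟨hch, List.isChain_singleton _, ?_⟩
        intro a ha b hb
        simp only [List.head?_cons, Option.mem_some_iff] at hb
        subst hb
        rintro ⟨e1, e2⟩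
        rw [Option.mem_def] at ha
        exact hlast (by rw [ha]; exact congrArg some (Prod.ext e1 e2))
      · rw [List.head?_append_of_ne_nil _ (by intro h; rw [h] at hlen; simp at hlen; omega), hhd]
    · intro a ha b hb hab
      exact List.append_cancel_right hab
    · intro M hM
      simp only [Axy, Finset.mem_filter, mem_lset] at hM
      obtain ⟨hlen, hch, hhd, hlast⟩ := hM
      have hMne : M ≠ [] := by intro h; subst h; simp at hlen
      have hy : M.getLast hMne = y := by
        rw [List.getLast?_eq_getLast hMne] at hlast
        exact Option.some.inj hlast
      have hM' : M.dropLast ++ [y] = M := by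
        have h := List.dropLast_concat_getLast hMne
        rwa [hy] at h
      have hdne : M.dropLast ≠ [] := by
        intro h
        rw [h] at hM'
        rw [← hM'] at hlen
        simp at hlen
        omega
      refine ⟨M.dropLast, ?_, hM'⟩
      simp only [Finset.mem_filter, Bx, mem_lset]
      have hchd : Rch M.dropLast := List.IsChain.prefix hch (List.dropLast_prefix M)
      have hch' : Rch (M.dropLast ++ [y]) := by rw [hM']; exact hch
      have hjunction := (List.isChain_append.mp hch').2.2
      refine ⟨⟨?_, hchd, ?_⟩, ?_⟩
      · have h : M.dropLast.length + 1 = M.length := by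
          conv_rhs => rw [← hM']
          simp
        omega
      · rw [← hM', List.head?_append_of_ne_nil _ hdne] at hhd
        exact hhd
      · intro hzy
        exact hjunction (y.1, !y.2) (by rw [Option.mem_def, hzy]) y (by simp) ⟨rfl, rfl⟩
  have h2 := Finset.card_filter_add_card_filter_not
    (s := Bx k n x) (p := fun L => L.getLast? = some (y.1, !y.2))
  rw [Bx_split] at h2
  omega


def flip1 (j : Fin k) (a : Fin k × Bool) : Fin k × Bool := if a.1 = j then (a.1, !a.2) else a

lemma flip1_invol (j : Fin k) (a : Fin k × Bool) : flip1 j (flip1 j a) = a := by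
  rcases a with ⟨i, b⟩
  simp only [flip1]
  split_ifs <;> simp_all

lemma flip1_rel (j : Fin k) (a b : Fin k × Bool) :
    ((flip1 j a).1 = (flip1 j b).1 ∧ (flip1 j a).2 = !(flip1 j b).2) ↔ (a.1 = b.1 ∧ a.2 = !b.2) := by
  rcases a with ⟨i1, b1⟩
  rcases b with ⟨i2, b2⟩
  simp only [flip1]
  split_ifs <;> cases b1 <;> cases b2 <;> simp_all <;> omega

lemma mem_Axy_map (n : ℕ) (j : Fin k) (x y : Fin k × Bool) (L : List (Fin k × Bool))
    (hL : L ∈ Axy k n x y) : L.map (flip1 j) ∈ Axy k n (flip1 j x) (flip1 j y) := by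
  simp only [Axy, Finset.mem_filter, mem_lset] at hL ⊢
  obtain ⟨hlen, hch, hhd, hlast⟩ := hL
  refine ⟨by simp [hlen], ?_, ?_, ?_⟩
  · rw [Rch, List.isChain_map]
    exact hch.imp (fun a b h => by rw [flip1_rel] at *; exact h)
  · rw [List.head?_map, hhd]; rfl
  · rw [List.getLast?_map, hlast]; rfl

lemma sym_card (n : ℕ) (j : Fin k) (x y : Fin k × Bool) :
    (Axy k n x y).card = (Axy k n (flip1 j x) (flip1 j y)).card := by
  apply Finset.card_nbij' (i := List.map (flip1 j)) (j := List.map (flip1 j))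
  · intro L hL; exact mem_Axy_map n j x y L hL
  · intro L hL
    have := mem_Axy_map n j _ _ L hL
    simpa [flip1_invol] using this
  · intro L _
    simp only [List.map_map]
    conv_rhs => rw [← List.map_id L]
    exact List.map_congr_left (fun a _ => flip1_invol j a)
  · intro L _
    simp only [List.map_map]
    conv_rhs => rw [← List.map_id L]
    exact List.map_congr_left (fun a _ => flip1_invol j a)

lemma Axy_one (x y : Fin k × Bool) : (Axy k 1 x y).card = if x = y then 1 else 0 := by
  have : Axy k 1 x y = if x = y then {[x]} else ∅ := by
    ext L
    simp only [Axy, Finset.mem_filter, mem_lset, List.length_eq_one_iff]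
    constructor
    · rintro ⟨⟨a, rfl⟩, _, h1, h2⟩
      simp only [List.head?_cons, Option.some.injEq] at h1
      simp only [List.getLast?_singleton, Option.some.injEq] at h2
      subst h1; subst h2
      simp
    · intro hL
      split_ifs at hL with h
      · simp only [Finset.mem_singleton] at hL
        subst hL; subst h
        exact ⟨⟨x, rfl⟩, List.isChain_singleton _, rfl, rfl⟩
      · simp at hL
  rw [this]
  split_ifs <;> simp

end lists2


lemma main_ind (k : ℕ) (hk : 2 ≤ k) : ∀ n, 1 ≤ n →
    nu k n ((⟨0, by omega⟩ : Fin k), true) ((⟨0, by omega⟩ : Fin k), true)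
      = nu k n ((⟨0, by omega⟩ : Fin k), true) ((⟨0, by omega⟩ : Fin k), false) + 1 ∧
    nu k n ((⟨0, by omega⟩ : Fin k), true) ((⟨1, by omega⟩ : Fin k), true)
      = nu k n ((⟨0, by omega⟩ : Fin k), true) ((⟨0, by omega⟩ : Fin k), false)
        + (if Even n then 1 else 0) := by
  have h01 : (⟨0, by omega⟩ : Fin k) ≠ ⟨1, by omega⟩ := by simp [Fin.ext_iff]
  simp only [nu_eq_card]
  refine Nat.le_induction ?_ ?_
  · rw [Axy_one, Axy_one, Axy_one]
    rw [if_pos rfl, if_neg (by simp), if_neg (by simp [h01])]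
    simp
  · intro n hn ih
    obtain ⟨ihb, iha⟩ := ih
    have r1 := rec_card (k := k) n hn (⟨0, by omega⟩, true) (⟨0, by omega⟩, true)
    have r2 := rec_card (k := k) n hn (⟨0, by omega⟩, true) (⟨0, by omega⟩, false)
    have r3 := rec_card (k := k) n hn (⟨0, by omega⟩, true) (⟨1, by omega⟩, true)
    simp only [Bool.not_true, Bool.not_false] at r1 r2 r3
    have e1 : flip1 (⟨1, by omega⟩ : Fin k) ((⟨0, by omega⟩ : Fin k), true) = ((⟨0, by omega⟩ : Fin k), true) := by
      simp [flip1, Fin.ext_iff]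
    have e2 : flip1 (⟨1, by omega⟩ : Fin k) ((⟨1, by omega⟩ : Fin k), false) = ((⟨1, by omega⟩ : Fin k), true) := by
      simp [flip1]
    have hsym := sym_card (k := k) n ⟨1, by omega⟩ ((⟨0, by omega⟩ : Fin k), true) ((⟨1, by omega⟩ : Fin k), false)
    simp only [e1, e2] at hsym
    have hp : (if Even (n+1) then (1:ℕ) else 0) + (if Even n then 1 else 0) = 1 := by
      rcases Nat.even_or_odd n with he | ho
      · simp [Nat.even_add_one, he]
      · simp [Nat.even_add_one, Nat.not_even_iff_odd.mpr ho, ho]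
    constructor
    · omega
    · generalize (if Even n then (1:ℕ) else 0) = p at iha hp
      generalize (if Even (n+1) then (1:ℕ) else 0) = p' at hp ⊢
      omega

end auxsec

/-- for `k ≥ 2` and `n ≥ 2`: `β_n = γ_n + 1` and
`α_n = γ_n + (1 + (-1)^n)/2` (that is `α_n = γ_n + 1` for even `n` and `α_n = γ_n` for
odd `n`); in particular `|α_n - γ_n| ≤ 1` and `|α_n - β_n| ≤ 2`. -/
theorem greek_differences (k : ℕ) (hk : 2 ≤ k) (n : ℕ) (hn : 2 ≤ n) :
    bet k n hk = gam k n hk + 1 ∧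
    (alph k n hk : ℤ) = gam k n hk + (1 + (-1) ^ n) / 2 ∧
    (Even n → alph k n hk = gam k n hk + 1) ∧
    (Odd n → alph k n hk = gam k n hk) ∧
    |(alph k n hk : ℤ) - gam k n hk| ≤ 1 ∧
    |(alph k n hk : ℤ) - bet k n hk| ≤ 2 := by

  obtain ⟨hb, ha⟩ := main_ind k hk n (by omega)
  have hb' : bet k n hk = gam k n hk + 1 := hb
  have ha' : alph k n hk = gam k n hk + (if Even n then 1 else 0) := ha
  have hpar : ((1 + (-1) ^ n : ℤ)) / 2 = if Even n then 1 else 0 := by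
    rcases Nat.even_or_odd n with he | ho
    · rw [he.neg_one_pow, if_pos he]; norm_num
    · rw [ho.neg_one_pow, if_neg (Nat.not_even_iff_odd.mpr ho)]; norm_num
  refine ⟨hb', ?_, ?_, ?_, ?_, ?_⟩
  · rw [hpar]
    rcases Nat.even_or_odd n with he | ho
    · rw [if_pos he]; rw [if_pos he] at ha'; push_cast [ha']; ring
    · rw [if_neg (Nat.not_even_iff_odd.mpr ho)]
      rw [if_neg (Nat.not_even_iff_odd.mpr ho)] at ha'
      push_cast [ha']; ring
  · intro he; rw [if_pos he] at ha'; exact ha'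
  · intro ho; rw [if_neg (Nat.not_even_iff_odd.mpr ho)] at ha'; omega
  · have h2 : alph k n hk = gam k n hk ∨ alph k n hk = gam k n hk + 1 := by
      rcases Nat.even_or_odd n with he | ho
      · right; rw [if_pos he] at ha'; exact ha'
      · left; rw [if_neg (Nat.not_even_iff_odd.mpr ho)] at ha'; omega
    rw [abs_le]; rcases h2 with h2 | h2 <;> constructor <;> push_cast [h2] <;> omega
  · have h2 : alph k n hk = gam k n hk ∨ alph k n hk = gam k n hk + 1 := by
      rcases Nat.even_or_odd n with he | ho
      · right; rw [if_pos he] at ha'; exact ha'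
      · left; rw [if_neg (Nat.not_even_iff_odd.mpr ho)] at ha'; omega
    rw [abs_le]; rcases h2 with h2 | h2 <;> constructor <;> push_cast [h2, hb'] <;> omega


end
end

section
/- For every k ≥ 2 and every n ≥ 2: |2k·α_n − (2k−1)^{n−1}| ≤ 3. -/
/-!
Common setup: `Fk k` is the free group `F_k` on `k` generators; letters of the
alphabet `S_k = {g_1,…,g_k,g_1⁻¹,…,g_k⁻¹}` are encoded as pairs in `Fin k × Bool`
(`(i, true)` is `g_{i+1}`, `(i, false)` is `g_{i+1}⁻¹`); `wlen u` is the length of the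
unique reduced word representing `u`; `words k n` is the (finite) set of elements of
length `n`; `w k n` is `w_n`, the sum of all reduced words of length `n` in the group
algebra `ℂ[F_k] = MonoidAlgebra ℂ (Fk k)`.
-/

open scoped BigOperators

noncomputable section

-- ===== auxiliary development =====
namespace AlphAux

abbrev Rl {A : Type*} (a b : A × Bool) : Prop := ¬(a.1 = b.1 ∧ a.2 = !b.2)

section ChainRed
variable {A : Type*} [DecidableEq A]

lemma chain'_reduce (L : List (A × Bool)) : List.IsChain Rl (FreeGroup.reduce L) := by
  induction L with
  | nil => simp
  | cons x L ih =>
    rw [FreeGroup.reduce.cons]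
    cases h : FreeGroup.reduce L with
    | nil => exact List.isChain_singleton x
    | cons y tl =>
      rw [h] at ih
      show List.IsChain Rl (if x.1 = y.1 ∧ x.2 = !y.2 then tl else x :: y :: tl)
      split_ifs with hxy
      · exact ih.tail
      · exact List.isChain_cons_cons.2 ⟨hxy, ih⟩

lemma reduce_eq_self_of_chain' {L : List (A × Bool)} (h : List.IsChain Rl L) :
    FreeGroup.reduce L = L := by
  induction L with
  | nil => rfl
  | cons x L ih =>
    rw [FreeGroup.reduce.cons, ih h.tail]
    cases L with
    | nil => rfl
    | cons y tl =>
      show (if x.1 = y.1 ∧ x.2 = !y.2 then tl else x :: y :: tl) = x :: y :: tl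
      rw [if_neg (List.isChain_cons_cons.1 h).1]

lemma reduce_eq_self_iff (L : List (A × Bool)) :
    FreeGroup.reduce L = L ↔ List.IsChain Rl L :=
  ⟨fun h => h ▸ chain'_reduce L, reduce_eq_self_of_chain'⟩

end ChainRed

abbrev Lt (k : ℕ) := Fin k × Bool

/-- A vector from a list and a length proof (typed as `List.Vector`). -/
def mkV {α : Type*} {n : ℕ} (l : List α) (h : l.length = n) : List.Vector α n := ⟨l, h⟩

/-- Reduced vectors of length `n` with given first and last letter. -/
def V (k n : ℕ) (x y : Lt k) : Finset (List.Vector (Lt k) n) :=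
  Finset.univ.filter fun v =>
    FreeGroup.reduce v.toList = v.toList ∧ v.toList.head? = some x ∧ v.toList.getLast? = some y

/-- Reduced vectors of length `n` with given first letter. -/
def T (k n : ℕ) (x : Lt k) : Finset (List.Vector (Lt k) n) :=
  Finset.univ.filter fun v =>
    FreeGroup.reduce v.toList = v.toList ∧ v.toList.head? = some x

lemma nu_eq_card (k n : ℕ) (x y : Lt k) : nu k n x y = (V k n x y).card := by
  classical
  unfold nu wordsXY words
  rw [Finset.filter_image, Finset.card_image_of_injOn, Finset.filter_filter]
  · congr 1
    apply Finset.filter_congr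
    intro v _
    constructor
    · rintro ⟨hred, h1, h2⟩
      rw [firstLetter, FreeGroup.toWord_mk, hred] at h1
      rw [lastLetter, FreeGroup.toWord_mk, hred] at h2
      exact ⟨hred, h1, h2⟩
    · rintro ⟨hred, h1, h2⟩
      refine ⟨hred, ?_, ?_⟩
      · rw [firstLetter, FreeGroup.toWord_mk, hred]; exact h1
      · rw [lastLetter, FreeGroup.toWord_mk, hred]; exact h2
  · intro v1 h1 v2 h2 hmk
    simp only [Finset.coe_filter, Set.mem_setOf_eq, Finset.mem_filter] at h1 h2
    have := congrArg FreeGroup.toWord hmk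
    rw [FreeGroup.toWord_mk, FreeGroup.toWord_mk, h1.1.2, h2.1.2] at this
    exact List.Vector.toList_injective this

lemma T_one (k : ℕ) (x : Lt k) : (T k 1 x).card = 1 := by
  rw [Finset.card_eq_one]
  refine ⟨mkV [x] rfl, ?_⟩
  ext v
  obtain ⟨a, ha⟩ := List.length_eq_one_iff.1 v.toList_length
  simp only [T, Finset.mem_filter, Finset.mem_univ, true_and, Finset.mem_singleton]
  constructor
  · rintro ⟨-, h⟩
    rw [ha] at h
    simp only [List.head?_cons, Option.some.injEq] at h
    apply List.Vector.toList_injective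
    rw [ha, h]; rfl
  · rintro rfl
    exact ⟨rfl, rfl⟩

lemma V_one (k : ℕ) (x y : Lt k) : (V k 1 x y).card = if x = y then 1 else 0 := by
  split_ifs with hxy
  · subst hxy
    rw [Finset.card_eq_one]
    refine ⟨mkV [x] rfl, ?_⟩
    ext v
    obtain ⟨a, ha⟩ := List.length_eq_one_iff.1 v.toList_length
    simp only [V, Finset.mem_filter, Finset.mem_univ, true_and, Finset.mem_singleton]
    constructor
    · rintro ⟨-, h, -⟩
      rw [ha] at h
      simp only [List.head?_cons, Option.some.injEq] at h
      apply List.Vector.toList_injective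
      rw [ha, h]
      rfl
    · rintro rfl
      exact ⟨rfl, rfl, rfl⟩
  · rw [Finset.card_eq_zero, Finset.eq_empty_iff_forall_notMem]
    intro v hv
    obtain ⟨a, ha⟩ := List.length_eq_one_iff.1 v.toList_length
    simp only [V, Finset.mem_filter, Finset.mem_univ, true_and, ha, List.head?_cons,
      List.getLast?_singleton, Option.some.injEq] at hv
    exact hxy (hv.2.1.symm.trans hv.2.2)

end AlphAux

namespace AlphAux

lemma T_filter_last (k n : ℕ) (x z : Lt k) :
    (T k n x).filter (fun v => v.toList.getLast? = some z) = V k n x z := by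
  unfold T V
  rw [Finset.filter_filter]
  apply Finset.filter_congr
  intro v _
  simp only [Finset.mem_univ, and_assoc]

lemma toList_ne_nil {k n : ℕ} (hn : 1 ≤ n) (v : List.Vector (Lt k) n) :
    v.toList ≠ [] := by
  intro h
  have := v.toList_length
  rw [h] at this
  simp at this
  omega

lemma T_card_eq_sum (k n : ℕ) (hn : 1 ≤ n) (x : Lt k) :
    (T k n x).card = ∑ y : Lt k, (V k n x y).card := by
  classical
  rw [Finset.card_eq_sum_card_fiberwise
    (f := fun v : List.Vector (Lt k) n => v.toList.getLast?.getD x)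
    (t := Finset.univ) (fun v _ => Finset.mem_univ _)]
  refine Finset.sum_congr rfl fun y _ => ?_
  rw [← T_filter_last k n x y]
  congr 1
  apply Finset.filter_congr
  intro v _
  obtain ⟨a, ha⟩ := Option.isSome_iff_exists.1 (List.getLast?_isSome.2 (toList_ne_nil hn v))
  simp [ha]

lemma V_succ_card (k n : ℕ) (hn : 1 ≤ n) (x y : Lt k) :
    (V k (n+1) x y).card
      = ((T k n x).filter fun v => ¬ v.toList.getLast? = some (linv y)).card := by
  classical
  refine Finset.card_bij'
    (fun v _ => (mkV v.toList.dropLast (by simp [v.toList_length]) : List.Vector (Lt k) n))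
    (fun v _ => (mkV (v.toList ++ [y]) (by simp [v.toList_length]) : List.Vector (Lt k) (n+1)))
    ?_ ?_ ?_ ?_
  · -- forward membership
    intro v hv
    simp only [V, Finset.mem_filter, Finset.mem_univ, true_and] at hv
    obtain ⟨hred, hhead, hlast⟩ := hv
    have hsplit : v.toList.dropLast ++ [y] = v.toList :=
      List.dropLast_append_getLast? y hlast
    have hchain : List.IsChain Rl (v.toList.dropLast ++ [y]) := by
      rw [hsplit]; exact (reduce_eq_self_iff _).1 hred
    have hdl := List.isChain_append.1 hchain
    have hdlne : v.toList.dropLast ≠ [] := by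
      have : v.toList.dropLast.length = n := by simp [v.toList_length]
      intro h; rw [h] at this; simp at this; omega
    simp only [T, Finset.mem_filter, Finset.mem_univ, true_and, Finset.mem_filter]
    refine ⟨⟨(reduce_eq_self_iff _).2 hdl.1, ?_⟩, ?_⟩
    · -- head
      show v.toList.dropLast.head? = some x
      rw [← hsplit] at hhead
      rw [List.head?_append, List.head?_eq_head hdlne, Option.some_or] at hhead
      rw [List.head?_eq_head hdlne]
      exact hhead
    · -- last ≠ linv y
      show ¬ v.toList.dropLast.getLast? = some (linv y)
      intro hcon
      have := hdl.2.2 (linv y) (by rw [Option.mem_def]; exact hcon) y (by simp)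
      exact this ⟨rfl, rfl⟩
  · -- backward membership
    intro v hv
    simp only [T, Finset.mem_filter, Finset.mem_univ, true_and] at hv
    obtain ⟨⟨hred, hhead⟩, hlast⟩ := hv
    simp only [V, Finset.mem_filter, Finset.mem_univ, true_and]
    refine ⟨?_, ?_, ?_⟩
    · show FreeGroup.reduce (v.toList ++ [y]) = v.toList ++ [y]
      apply (reduce_eq_self_iff _).2
      apply List.isChain_append.2
      refine ⟨(reduce_eq_self_iff _).1 hred, List.isChain_singleton y, ?_⟩
      intro z hz y' hy'
      simp only [List.head?_cons, Option.mem_def, Option.some.injEq] at hy'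
      subst hy'
      rintro ⟨h1, h2⟩
      apply hlast
      rw [Option.mem_def] at hz
      rw [hz]
      congr 1
      exact Prod.ext h1 h2
    · show (v.toList ++ [y]).head? = some x
      rw [List.head?_append, List.head?_eq_head (toList_ne_nil hn v), Option.some_or]
      rw [List.head?_eq_head (toList_ne_nil hn v), Option.some.injEq] at hhead
      exact congrArg some hhead
    · show (v.toList ++ [y]).getLast? = some y
      exact List.getLast?_concat
  · -- left inverse
    intro v hv
    simp only [V, Finset.mem_filter, Finset.mem_univ, true_and] at hv
    apply List.Vector.toList_injective
    show v.toList.dropLast ++ [y] = v.toList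
    exact List.dropLast_append_getLast? y hv.2.2
  · -- right inverse
    intro v hv
    apply List.Vector.toList_injective
    show (v.toList ++ [y]).dropLast = v.toList
    exact List.dropLast_concat

/-- The basic recurrence, subtraction-free. -/
lemma V_succ_add (k n : ℕ) (hn : 1 ≤ n) (x y : Lt k) :
    (V k (n+1) x y).card + (V k n x (linv y)).card = (T k n x).card := by
  classical
  rw [V_succ_card k n hn x y, ← T_filter_last k n x (linv y), Nat.add_comm]
  exact Finset.card_filter_add_card_filter_not _

end AlphAux

namespace AlphAux

lemma Rl_iff {k : ℕ} (a b : Lt k) : Rl a b ↔ a ≠ linv b := by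
  simp [linv, Prod.ext_iff]

lemma V_card_map (k n : ℕ) (e : Lt k → Lt k) (he : ∀ a, e (e a) = a)
    (hcomm : ∀ a, e (linv a) = linv (e a)) (x y : Lt k) :
    (V k n x y).card = (V k n (e x) (e y)).card := by
  classical
  have einj : Function.Injective e := fun a b h => by rw [← he a, h, he]
  have hchain : ∀ L : List (Lt k), List.IsChain Rl L → List.IsChain Rl (L.map e) := by
    intro L hL
    apply List.isChain_map_of_isChain e ?_ hL
    intro a b hab
    rw [Rl_iff] at hab ⊢
    intro hc
    exact hab (einj (hc.trans (hcomm b).symm))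
  have hmapmap : ∀ L : List (Lt k), (L.map e).map e = L := by
    intro L
    rw [List.map_map, show e ∘ e = id from funext he, List.map_id]
  have hmem : ∀ (x y : Lt k) (v : List.Vector (Lt k) n), v ∈ V k n x y →
      (mkV (v.toList.map e) (by simp [v.toList_length]) : List.Vector (Lt k) n)
        ∈ V k n (e x) (e y) := by
    intro x y v hv
    simp only [V, Finset.mem_filter, Finset.mem_univ, true_and] at hv ⊢
    obtain ⟨hred, hh, hl⟩ := hv
    refine ⟨?_, ?_, ?_⟩
    · show FreeGroup.reduce (v.toList.map e) = v.toList.map e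
      exact (reduce_eq_self_iff _).2 (hchain _ ((reduce_eq_self_iff _).1 hred))
    · show (v.toList.map e).head? = some (e x)
      rw [List.head?_map, hh]; rfl
    · show (v.toList.map e).getLast? = some (e y)
      rw [List.getLast?_map, hl]; rfl
  refine Finset.card_bij'
    (fun v _ => mkV (v.toList.map e) (by simp [v.toList_length]))
    (fun v _ => mkV (v.toList.map e) (by simp [v.toList_length]))
    (fun v hv => hmem x y v hv) (fun v hv => by
      have := hmem (e x) (e y) v hv
      rwa [he, he] at this) ?_ ?_
  · intro v _
    apply List.Vector.toList_injective
    exact hmapmap v.toList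
  · intro v _
    apply List.Vector.toList_injective
    exact hmapmap v.toList

lemma nu_symm (k n : ℕ) (i0 i1 : Fin k) (h01 : i0 ≠ i1) (y : Lt k) (hy : y.1 ≠ i0) :
    (V k n (i0, true) y).card = (V k n (i0, true) (i1, true)).card := by
  classical
  set e : Lt k → Lt k := fun a =>
    (Equiv.swap i1 y.1 a.1, if a.1 = i1 ∨ a.1 = y.1 then xor a.2 (!y.2) else a.2) with hedef
  have hswap_mem : ∀ j : Fin k,
      (Equiv.swap i1 y.1 j = i1 ∨ Equiv.swap i1 y.1 j = y.1) ↔ (j = i1 ∨ j = y.1) := by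
    intro j
    rw [Equiv.swap_apply_eq_iff, Equiv.swap_apply_eq_iff, Equiv.swap_apply_left,
      Equiv.swap_apply_right, or_comm]
  have he : ∀ a, e (e a) = a := by
    rintro ⟨j, b⟩
    simp only [hedef, Equiv.swap_apply_self, hswap_mem]
    by_cases hP : j = i1 ∨ j = y.1
    · simp only [if_pos hP]
      cases b <;> cases y.2 <;> rfl
    · simp only [if_neg hP]
  have hcomm : ∀ a, e (linv a) = linv (e a) := by
    rintro ⟨j, b⟩
    simp only [hedef, linv]
    by_cases hP : j = i1 ∨ j = y.1
    · simp only [if_pos hP]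
      cases b <;> cases y.2 <;> rfl
    · simp only [if_neg hP]
  have hx0 : e (i0, true) = (i0, true) := by
    simp only [hedef]
    rw [Equiv.swap_apply_of_ne_of_ne h01 (Ne.symm hy), if_neg (not_or.mpr ⟨h01, Ne.symm hy⟩)]
  have hey : e (i1, true) = y := by
    simp only [hedef]
    rw [Equiv.swap_apply_left]
    simp only [true_or, if_true]
    have hxor : (true ^^ !y.2) = y.2 := by cases y.2 <;> rfl
    rw [hxor]
  have hey2 : e y = (i1, true) := by rw [← hey, he]
  rw [V_card_map k n e he hcomm (i0, true) y, hx0, hey2]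

lemma card_Lt (k : ℕ) : Fintype.card (Lt k) = 2 * k := by
  simp [mul_comm]

lemma sum_linv {k : ℕ} (f : Lt k → ℕ) : ∑ y : Lt k, f (linv y) = ∑ y : Lt k, f y := by
  exact Fintype.sum_bijective linv
    (Function.Involutive.bijective (fun a => by simp [linv])) _ _ (fun y => rfl)

lemma T_succ (k n : ℕ) (hn : 1 ≤ n) (x : Lt k) :
    (T k (n+1) x).card + (T k n x).card = 2 * k * (T k n x).card := by
  have h2 : ∑ y : Lt k, ((V k (n+1) x y).card + (V k n x (linv y)).card)
      = ∑ _y : Lt k, (T k n x).card :=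
    Finset.sum_congr rfl fun y _ => V_succ_add k n hn x y
  rw [Finset.sum_add_distrib, sum_linv (fun y => (V k n x y).card),
    ← T_card_eq_sum k n hn x, ← T_card_eq_sum k (n+1) (by omega) x,
    Finset.sum_const, smul_eq_mul, Finset.card_univ, card_Lt] at h2
  exact h2

lemma T_card (k n : ℕ) (hn : 1 ≤ n) (x : Lt k) :
    (T k n x).card = (2 * k - 1) ^ (n - 1) := by
  induction n, hn using Nat.le_induction with
  | base => simpa using T_one k x
  | succ n hn ih =>
    have h := T_succ k n hn x
    have h' : (T k (n+1) x).card = 2 * k * (T k n x).card - (T k n x).card :=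
      Nat.eq_sub_of_add_eq h
    rw [← Nat.sub_one_mul] at h'
    rw [h', ih]
    have hn1 : n + 1 - 1 = n := by omega
    rw [hn1]
    conv_rhs => rw [show n = (n - 1) + 1 by omega, pow_succ]
    ring

lemma total_split (k n : ℕ) (hn : 1 ≤ n) (i0 i1 : Fin k) (h01 : i0 ≠ i1) :
    (T k n (i0, true)).card
      = (V k n (i0, true) (i0, true)).card + (V k n (i0, true) (i0, false)).card
        + (2 * k - 2) * (V k n (i0, true) (i1, true)).card := by
  classical
  rw [T_card_eq_sum k n hn,
    ← Finset.sum_filter_add_sum_filter_not Finset.univ (fun y : Lt k => y.1 = i0)]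
  have hfil : Finset.univ.filter (fun y : Lt k => y.1 = i0)
      = {((i0, true) : Lt k), (i0, false)} := by
    ext ⟨j, b⟩
    simp only [Finset.mem_filter, Finset.mem_univ, true_and, Finset.mem_insert,
      Finset.mem_singleton, Prod.ext_iff]
    cases b <;> simp
  have h1 : ∑ y ∈ Finset.univ.filter (fun y : Lt k => y.1 = i0), (V k n (i0, true) y).card
      = (V k n (i0, true) (i0, true)).card + (V k n (i0, true) (i0, false)).card := by
    rw [hfil, Finset.sum_pair (by simp)]
  have h2 : ∑ y ∈ Finset.univ.filter (fun y : Lt k => ¬ y.1 = i0), (V k n (i0, true) y).card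
      = (2 * k - 2) * (V k n (i0, true) (i1, true)).card := by
    rw [Finset.sum_congr rfl (fun y hy => nu_symm k n i0 i1 h01 y
      (by simpa using (Finset.mem_filter.1 hy).2)), Finset.sum_const, smul_eq_mul]
    congr 1
    have hcards := Finset.card_filter_add_card_filter_not
      (s := (Finset.univ : Finset (Lt k))) (fun y : Lt k => y.1 = i0)
    rw [hfil] at hcards
    have hpair : ({((i0, true) : Lt k), (i0, false)} : Finset (Lt k)).card = 2 := by
      rw [Finset.card_pair (by simp)]
    rw [hpair, Finset.card_univ, card_Lt] at hcards
    omega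
  rw [h1, h2]

end AlphAux

namespace AlphAux

lemma key (k : ℕ) (i0 i1 : Fin k) (h01 : i0 ≠ i1) :
    ∀ n, 1 ≤ n →
    2 * ((V k n (i0, true) (i1, true)).card : ℤ)
      - ((V k n (i0, true) (i0, true)).card : ℤ)
      - ((V k n (i0, true) (i0, false)).card : ℤ) = (-1) ^ n := by
  intro n hn
  induction n, hn using Nat.le_induction with
  | base =>
    rw [V_one, V_one, V_one]
    rw [if_neg (by simp [Prod.ext_iff, h01]), if_pos rfl, if_neg (by simp)]
    norm_num
  | succ n hn ih =>
    have hA := V_succ_add k n hn (i0, true) (i1, true)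
    have hB := V_succ_add k n hn (i0, true) (i0, true)
    have hC := V_succ_add k n hn (i0, true) (i0, false)
    have hlA : linv ((i1 : Fin k), true) = (i1, false) := rfl
    have hlB : linv ((i0 : Fin k), true) = (i0, false) := rfl
    have hlC : linv ((i0 : Fin k), false) = (i0, true) := rfl
    rw [hlA] at hA
    rw [hlB] at hB
    rw [hlC] at hC
    have hsym : (V k n (i0, true) ((i1 : Fin k), false)).card
        = (V k n (i0, true) (i1, true)).card :=
      nu_symm k n i0 i1 h01 (i1, false) (by simpa using h01.symm)
    rw [hsym] at hA
    have hAz : ((V k (n+1) (i0, true) (i1, true)).card : ℤ)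
        + ((V k n (i0, true) (i1, true)).card : ℤ) = ((T k n (i0, true)).card : ℤ) := by
      exact_mod_cast congrArg (Nat.cast : ℕ → ℤ) hA
    have hBz : ((V k (n+1) (i0, true) (i0, true)).card : ℤ)
        + ((V k n (i0, true) (i0, false)).card : ℤ) = ((T k n (i0, true)).card : ℤ) := by
      exact_mod_cast congrArg (Nat.cast : ℕ → ℤ) hB
    have hCz : ((V k (n+1) (i0, true) (i0, false)).card : ℤ)
        + ((V k n (i0, true) (i0, true)).card : ℤ) = ((T k n (i0, true)).card : ℤ) := by
      exact_mod_cast congrArg (Nat.cast : ℕ → ℤ) hC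
    rw [pow_succ]
    linarith [ih]

end AlphAux

/-- for `k ≥ 2` and `n ≥ 2`: `|2k·α_n - (2k-1)^{n-1}| ≤ 3`. -/
theorem alph_est (k : ℕ) (hk : 2 ≤ k) (n : ℕ) (hn : 2 ≤ n) :
    |2 * (k : ℤ) * alph k n hk - (2 * (k : ℤ) - 1) ^ (n - 1)| ≤ 3 := by
  have h0 : 0 < k := by omega
  have h1 : 1 < k := by omega
  set i0 : Fin k := ⟨0, h0⟩ with hi0
  set i1 : Fin k := ⟨1, h1⟩ with hi1
  have h01 : i0 ≠ i1 := by simp [hi0, hi1, Fin.ext_iff]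
  have hα : alph k n hk = (AlphAux.V k n (i0, true) (i1, true)).card :=
    AlphAux.nu_eq_card k n (i0, true) (i1, true)
  have hT := AlphAux.T_card k n (by omega) ((i0, true) : AlphAux.Lt k)
  have hsplit := AlphAux.total_split k n (by omega) i0 i1 h01
  have hkey := AlphAux.key k i0 i1 h01 n (by omega)
  set A := ((AlphAux.V k n (i0, true) (i1, true)).card : ℤ) with hA
  set B := ((AlphAux.V k n (i0, true) (i0, true)).card : ℤ) with hB
  set C := ((AlphAux.V k n (i0, true) (i0, false)).card : ℤ) with hC
  have hαz : (alph k n hk : ℤ) = A := by rw [hA]; exact_mod_cast hα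
  have hc1 : ((2 * k - 1 : ℕ) : ℤ) = 2 * (k : ℤ) - 1 := by omega
  have hc2 : ((2 * k - 2 : ℕ) : ℤ) = 2 * (k : ℤ) - 2 := by omega
  have hTz : ((AlphAux.T k n (i0, true)).card : ℤ) = (2 * (k : ℤ) - 1) ^ (n - 1) := by
    rw [hT, Nat.cast_pow, hc1]
  have hsz : ((AlphAux.T k n (i0, true)).card : ℤ)
      = B + C + (2 * (k : ℤ) - 2) * A := by
    rw [← hc2, hB, hC, hA]
    exact_mod_cast hsplit
  have hmain : 2 * (k : ℤ) * (alph k n hk : ℤ) - (2 * (k : ℤ) - 1) ^ (n - 1)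
      = (-1) ^ n := by
    rw [hαz, ← hTz]
    linear_combination hkey - hsz
  rw [hmain, abs_pow]
  norm_num
end
end

section
/- For every k ≥ 2 and every n ≥ 2, if σ_1, σ_2, τ_1, τ_2 are nonempty subsets of S_k with |σ_1| = |σ_2| and |τ_1| = |τ_2|, then |ν_n(σ_1,τ_1) − ν_n(σ_2,τ_2)| ≤ 2|σ_1||τ_1|(2 + 3/(2k)); in particular the difference is at most D_k = 8k²(2 + 3/(2k)) = 16k² + 12k. -/
/-!
Common setup: `Fk k` is the free group `F_k` on `k` generators; letters of the
alphabet `S_k = {g_1,…,g_k,g_1⁻¹,…,g_k⁻¹}` are encoded as pairs in `Fin k × Bool`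
(`(i, true)` is `g_{i+1}`, `(i, false)` is `g_{i+1}⁻¹`); `wlen u` is the length of the
unique reduced word representing `u`; `words k n` is the (finite) set of elements of
length `n`; `w k n` is `w_n`, the sum of all reduced words of length `n` in the group
algebra `ℂ[F_k] = MonoidAlgebra ℂ (Fk k)`.
-/

open scoped BigOperators

noncomputable section

namespace NuAux
variable {k : ℕ}

def RedL {k : ℕ} (l : List (Fin k × Bool)) : Prop :=
  l.IsChain (fun a b => ¬(a.1 = b.1 ∧ a.2 = !b.2))

instance {k : ℕ} (l : List (Fin k × Bool)) : Decidable (RedL l) := by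
  unfold RedL; infer_instance


lemma linv_linv (a : Fin k × Bool) : linv (linv a) = a := by simp [linv]

lemma rel_iff (a b : Fin k × Bool) : ¬(a.1 = b.1 ∧ a.2 = !b.2) ↔ a ≠ linv b := by
  constructor
  · rintro h rfl; exact h ⟨rfl, rfl⟩
  · intro h hc; exact h (Prod.ext hc.1 hc.2)

lemma eq_linv_comm (a b : Fin k × Bool) : a = linv b ↔ b = linv a := by
  constructor <;> (rintro rfl; simp [linv])

lemma reduce_eq_self_iff (l : List (Fin k × Bool)) :
    FreeGroup.reduce l = l ↔ RedL l := by
  induction l with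
  | nil => simp [RedL]
  | cons a l ih =>
    constructor
    · intro h
      rw [FreeGroup.reduce.cons] at h
      rcases hr : FreeGroup.reduce l with _ | ⟨b, t⟩
      · rw [hr] at h
        simp only at h
        have : l = [] := by
          have := congrArg List.length h
          simp at this
          simpa using this.symm
        subst this; simp [RedL]
      · rw [hr] at h
        simp only at h
        by_cases hc : a.1 = b.1 ∧ a.2 = !b.2
        · rw [if_pos hc] at h
          have hlen : (b :: t).length ≤ l.length :=
            hr ▸ FreeGroup.Red.length_le (FreeGroup.reduce.red)
          have := congrArg List.length h
          simp at this hlen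
          omega
        · rw [if_neg hc] at h
          have hl : l = b :: t := by
            injection h with h1 h2
            exact h2.symm
          have hred : RedL l := ih.mp (by rw [hr, hl])
          rw [hl]
          exact List.isChain_cons_cons.mpr ⟨hc, hl ▸ hred⟩
    · intro h
      have htl : RedL l := h.tail
      have hrl : FreeGroup.reduce l = l := ih.mpr htl
      rw [FreeGroup.reduce.cons, hrl]
      cases l with
      | nil => rfl
      | cons b t =>
        simp only
        rw [if_neg (List.isChain_cons_cons.mp h).1]


def lists (k n : ℕ) : Finset (List (Fin k × Bool)) :=
  (Finset.univ : Finset (List.Vector (Fin k × Bool) n)).map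
    ⟨List.Vector.toList, fun a b h => by
      exact Subtype.ext h⟩

lemma mem_lists {n : ℕ} {l : List (Fin k × Bool)} : l ∈ lists k n ↔ l.length = n := by
  simp only [lists, Finset.mem_map, Finset.mem_univ, true_and, Function.Embedding.coeFn_mk]
  constructor
  · rintro ⟨v, rfl⟩; exact v.toList_length
  · intro h; exact ⟨⟨l, h⟩, rfl⟩

def LXY (k n : ℕ) (x y : Fin k × Bool) : Finset (List (Fin k × Bool)) :=
  (lists k n).filter (fun l => RedL l ∧ l.head? = some x ∧ l.getLast? = some y)

def LX (k n : ℕ) (x : Fin k × Bool) : Finset (List (Fin k × Bool)) :=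
  (lists k n).filter (fun l => RedL l ∧ l.head? = some x)

lemma mem_words {n : ℕ} {u : Fk k} : u ∈ words k n ↔ (FreeGroup.toWord u).length = n := by
  simp only [words, Finset.mem_image, Finset.mem_filter, Finset.mem_univ, true_and]
  constructor
  · rintro ⟨v, hv, rfl⟩
    rw [FreeGroup.toWord_mk, hv]
    exact v.toList_length
  · intro h
    exact ⟨⟨FreeGroup.toWord u, h⟩, FreeGroup.reduce_toWord u, FreeGroup.mk_toWord⟩

lemma mem_wordsXY {n : ℕ} {x y : Fin k × Bool} {u : Fk k} :
    u ∈ wordsXY k n x y ↔ (FreeGroup.toWord u).length = n ∧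
      (FreeGroup.toWord u).head? = some x ∧ (FreeGroup.toWord u).getLast? = some y := by
  rw [wordsXY, Finset.mem_filter, mem_words]
  exact Iff.rfl

lemma nu_eq (n : ℕ) (x y : Fin k × Bool) : nu k n x y = (LXY k n x y).card := by
  refine Finset.card_bij' (fun u _ => FreeGroup.toWord u) (fun l _ => FreeGroup.mk l)
    ?hi ?hj ?left ?right
  case hi =>
    intro u hu
    rw [mem_wordsXY] at hu
    simp only [LXY, Finset.mem_filter, mem_lists]
    exact ⟨hu.1, (reduce_eq_self_iff _).mp (FreeGroup.reduce_toWord u), hu.2⟩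
  case hj =>
    intro l hl
    simp only [LXY, Finset.mem_filter, mem_lists] at hl
    have hw : FreeGroup.toWord (FreeGroup.mk l) = l := by
      rw [FreeGroup.toWord_mk, (reduce_eq_self_iff _).mpr hl.2.1]
    rw [mem_wordsXY, hw]
    exact ⟨hl.1, hl.2.2⟩
  case left => intro u _; exact FreeGroup.mk_toWord
  case right =>
    intro l hl
    simp only [LXY, Finset.mem_filter, mem_lists] at hl
    show FreeGroup.toWord (FreeGroup.mk l) = l
    rw [FreeGroup.toWord_mk, (reduce_eq_self_iff _).mpr hl.2.1]

end NuAux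

namespace NuAux
variable {k : ℕ}

lemma LXY_subset_LX {n : ℕ} {x y : Fin k × Bool} : LXY k n x y ⊆ LX k n x := by
  intro l hl
  simp only [LXY, LX, Finset.mem_filter] at *
  exact ⟨hl.1, hl.2.1, hl.2.2.1⟩

lemma sum_LXY_card (n : ℕ) (hn : 1 ≤ n) (x : Fin k × Bool) :
    ∑ z : Fin k × Bool, (LXY k n x z).card = (LX k n x).card := by
  have hU : LX k n x = Finset.univ.biUnion (fun z => LXY k n x z) := by
    ext l
    simp only [Finset.mem_biUnion, Finset.mem_univ, true_and, LX, LXY, Finset.mem_filter,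
      mem_lists]
    constructor
    · rintro ⟨hlen, hred, hhead⟩
      have hne : l ≠ [] := by
        intro h; rw [h] at hlen; simp at hlen; omega
      exact ⟨l.getLast hne, ⟨hlen, hred, hhead, List.getLast?_eq_getLast hne⟩⟩
    · rintro ⟨z, hlen, hred, hhead, _⟩
      exact ⟨hlen, hred, hhead⟩
  rw [hU, Finset.card_biUnion]
  intro a _ b _ hab
  simp only [Finset.disjoint_left, LXY, Finset.mem_filter]
  rintro l ⟨_, _, _, h1⟩ ⟨_, _, _, h2⟩
  rw [h1] at h2
  exact hab (Option.some_inj.mp h2)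

lemma card_LXY_succ (n : ℕ) (hn : 1 ≤ n) (x y : Fin k × Bool) :
    (LXY k (n+1) x y).card + (LXY k n x (linv y)).card = (LX k n x).card := by
  have hbij : (LXY k (n+1) x y).card
      = ((LX k n x).filter (fun l => ¬(l.getLast? = some (linv y)))).card := by
    refine Finset.card_bij' (fun l _ => l.dropLast) (fun m _ => m ++ [y]) ?hi ?hj ?left ?right
    case hi =>
      intro l hl
      simp only [LXY, Finset.mem_filter, mem_lists] at hl
      obtain ⟨hlen, hred, hhead, hlast⟩ := hl
      have hne : l ≠ [] := by intro h; rw [h] at hlen; simp at hlen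
      have hy : l.getLast hne = y := by
        rw [List.getLast?_eq_getLast hne] at hlast
        exact Option.some_inj.mp hlast
      have hdecomp : l.dropLast ++ [y] = l := by
        rw [← hy]; exact List.dropLast_concat_getLast hne
      have hdlen : l.dropLast.length = n := by rw [List.length_dropLast, hlen]; omega
      have hdne : l.dropLast ≠ [] := by
        intro h; rw [h] at hdlen; simp at hdlen; omega
      rw [← hdecomp] at hred
      obtain ⟨hred1, _, hjun⟩ := List.isChain_append.mp hred
      simp only [Finset.mem_filter, LX, mem_lists]
      refine ⟨⟨hdlen, hred1, ?_⟩, ?_⟩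
      · have h2 := List.head?_append_of_ne_nil l.dropLast (l₂ := [y]) hdne
        rw [hdecomp] at h2
        rw [← h2, hhead]
      · intro hcon
        have := hjun (linv y) hcon y (by simp)
        exact this ⟨rfl, by simp [linv]⟩
    case hj =>
      intro m hm
      simp only [Finset.mem_filter, LX, mem_lists] at hm
      obtain ⟨⟨hlen, hred, hhead⟩, hlast⟩ := hm
      have hmne : m ≠ [] := by intro h; rw [h] at hlen; simp at hlen; omega
      simp only [LXY, Finset.mem_filter, mem_lists]
      refine ⟨by simp [hlen], ?_, ?_, List.getLast?_concat⟩
      · refine List.isChain_append.mpr ⟨hred, List.isChain_singleton y, ?_⟩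
        intro a ha b hb
        simp only [List.head?_cons, Option.mem_def, Option.some_inj] at hb
        subst hb
        rintro ⟨h1, h2⟩
        exact hlast (by rw [ha]; congr 1; exact Prod.ext h1 (by simp [linv, h2]))
      · rw [List.head?_append_of_ne_nil _ hmne, hhead]
    case left =>
      intro l hl
      simp only [LXY, Finset.mem_filter, mem_lists] at hl
      obtain ⟨hlen, _, _, hlast⟩ := hl
      have hne : l ≠ [] := by intro h; rw [h] at hlen; simp at hlen
      have hy : l.getLast hne = y := by
        rw [List.getLast?_eq_getLast hne] at hlast
        exact Option.some_inj.mp hlast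
      show l.dropLast ++ [y] = l
      rw [← hy]; exact List.dropLast_concat_getLast hne
    case right =>
      intro m _
      exact List.dropLast_concat
  rw [hbij]
  rw [show LXY k n x (linv y) = (LX k n x).filter (fun l => l.getLast? = some (linv y)) from ?_]
  · rw [add_comm, Finset.card_filter_add_card_filter_not]
  · ext l
    simp only [LXY, LX, Finset.mem_filter, mem_lists]
    tauto

end NuAux

namespace NuAux
variable {k : ℕ}

def eN {k : ℕ} (n : ℕ) (x y : Fin k × Bool) : ℕ :=
  if Even n then (if y = linv x then 0 else 1) else (if y = x then 1 else 0)

lemma eN_le_one (n : ℕ) (x y : Fin k × Bool) : eN n x y ≤ 1 := by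
  unfold eN; split <;> split <;> omega

lemma linv_inj : Function.Injective (linv (k := k)) := by
  intro a b h
  have h2 := congrArg linv h
  rwa [linv_linv, linv_linv] at h2

lemma eN_step (n : ℕ) (x y : Fin k × Bool) :
    eN (n + 1) x y + eN n x (linv y) = 1 := by
  unfold eN
  by_cases hp : Even n
  · rw [if_neg (by simpa [Nat.even_add_one] using hp), if_pos hp]
    have : (linv y = linv x) ↔ (y = x) := ⟨fun h => linv_inj h, fun h => by rw [h]⟩
    by_cases hxy : y = x
    · rw [if_pos hxy, if_pos (this.mpr hxy)]
    · rw [if_neg hxy, if_neg (fun h => hxy (this.mp h))]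
  · rw [if_pos (by simpa [Nat.even_add_one] using hp), if_neg hp]
    have : (linv y = x) ↔ (y = linv x) := by
      constructor
      · rintro rfl; rw [linv_linv]
      · rintro rfl; rw [linv_linv]
    by_cases hxy : y = linv x
    · rw [if_pos hxy, if_pos (this.mpr hxy)]
    · rw [if_neg hxy, if_neg (fun h => hxy (this.mp h))]

lemma card_LXY_two (x y : Fin k × Bool) :
    (LXY k 2 x y).card = eN 2 x y := by
  have : LXY k 2 x y = if y = linv x then (∅ : Finset (List (Fin k × Bool))) else {[x, y]} := by
    ext l
    simp only [LXY, Finset.mem_filter, mem_lists]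
    constructor
    · rintro ⟨hlen, hred, hhead, hlast⟩
      obtain ⟨a, b, rfl⟩ := List.length_eq_two.mp hlen
      simp only [List.head?_cons, Option.some_inj] at hhead
      have hlast' : b = y := by
        have : [a, b].getLast? = some b := rfl
        rw [this] at hlast; exact Option.some_inj.mp hlast
      have hr : ¬(a.1 = b.1 ∧ a.2 = !b.2) := (List.isChain_cons_cons.mp hred).1
      rw [rel_iff, hhead, hlast'] at hr
      rw [if_neg (fun h => hr ((eq_linv_comm y x).mp h))]
      simp [hhead, hlast']
    · intro hl
      by_cases hc : y = linv x
      · rw [if_pos hc] at hl; simp at hl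
      · rw [if_neg hc] at hl
        simp only [Finset.mem_singleton] at hl
        subst hl
        refine ⟨rfl, ?_, rfl, rfl⟩
        refine List.isChain_cons_cons.mpr ⟨?_, List.isChain_singleton y⟩
        rw [rel_iff]
        exact fun h => hc ((eq_linv_comm x y).mp h)
  rw [this]
  by_cases hc : y = linv x <;> simp [eN, hc, Nat.even_iff]

lemma key (hk : 2 ≤ k) : ∀ n, 2 ≤ n →
    ∃ m : ℕ, ∀ x y : Fin k × Bool, (LXY k n x y).card = m + eN n x y := by
  intro n hn
  induction n, hn using Nat.le_induction with
  | base => exact ⟨0, fun x y => by rw [card_LXY_two]; omega⟩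
  | succ n hn ih =>
    obtain ⟨m, hm⟩ := ih
    set s : ℕ := if Even n then 2 * k - 1 else 1 with hs
    have hs1 : 1 ≤ s := by rw [hs]; split <;> omega
    have hcard : Fintype.card (Fin k × Bool) = 2 * k := by simp [mul_comm]
    have hsum : ∀ x : Fin k × Bool, ∑ z : Fin k × Bool, eN n x z = s := by
      intro x
      by_cases hp : Even n
      · rw [hs, if_pos hp]
        have : ∀ z : Fin k × Bool, eN n x z = if z = linv x then 0 else 1 := by
          intro z; unfold eN; rw [if_pos hp]
        simp only [this]
        rw [← Finset.add_sum_erase _ _ (Finset.mem_univ (linv x)), if_pos rfl]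
        rw [Finset.sum_congr rfl (fun z hz => if_neg (Finset.ne_of_mem_erase hz))]
        rw [Finset.sum_const, Finset.card_erase_of_mem (Finset.mem_univ _)]
        simp [hcard]
      · rw [hs, if_neg hp]
        have : ∀ z : Fin k × Bool, eN n x z = if z = x then 1 else 0 := by
          intro z; unfold eN; rw [if_neg hp]
        simp only [this, Finset.sum_ite_eq', Finset.mem_univ, if_pos]
    refine ⟨2 * k * m + s - 1 - m, fun x y => ?_⟩
    have h1 : (LXY k (n+1) x y).card + (LXY k n x (linv y)).card = (LX k n x).card :=
      card_LXY_succ n (by omega) x y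
    have h2 : (LX k n x).card = 2 * k * m + s := by
      rw [← sum_LXY_card n (by omega) x]
      rw [Finset.sum_congr rfl (fun z _ => hm x z), Finset.sum_add_distrib,
        Finset.sum_const, hsum x]
      simp [hcard, Finset.card_univ]
    rw [hm x (linv y)] at h1
    have h3 : eN (n+1) x y + eN n x (linv y) = 1 := eN_step n x y
    have h4 : m ≤ 2 * k * m := Nat.le_mul_of_pos_left m (by omega)
    omega

end NuAux

namespace NuAux
variable {k : ℕ}

lemma nuS_eq_sum (n : ℕ) (σ τ : Finset (Fin k × Bool)) :
    nuS k n σ τ = ∑ p ∈ σ ×ˢ τ, nu k n p.1 p.2 := by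
  unfold nuS
  have hU : (words k n).filter
      (fun u => (∃ a ∈ σ, firstLetter u = some a) ∧ (∃ b ∈ τ, lastLetter u = some b))
      = (σ ×ˢ τ).biUnion (fun p => wordsXY k n p.1 p.2) := by
    ext u
    simp only [Finset.mem_filter, Finset.mem_biUnion, Finset.mem_product, wordsXY]
    constructor
    · rintro ⟨hw, ⟨a, ha, hfa⟩, ⟨b, hb, hlb⟩⟩
      exact ⟨(a, b), ⟨ha, hb⟩, hw, hfa, hlb⟩
    · rintro ⟨⟨a, b⟩, ⟨ha, hb⟩, hw, hf, hl⟩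
      exact ⟨hw, ⟨a, ha, hf⟩, ⟨b, hb, hl⟩⟩
  rw [hU, Finset.card_biUnion]
  · rfl
  · rintro ⟨a, b⟩ _ ⟨c, d⟩ _ hne
    simp only [Finset.disjoint_left, wordsXY, Finset.mem_filter]
    rintro u ⟨_, h1, h2⟩ ⟨_, h3, h4⟩
    rw [h1] at h3
    rw [h2] at h4
    refine hne ?_
    rw [Prod.mk.injEq]
    exact ⟨Option.some_inj.mp h3, Option.some_inj.mp h4⟩

lemma nuS_bounds (hk : 2 ≤ k) (n : ℕ) (hn : 2 ≤ n) :
    ∃ m : ℕ, (∀ σ' τ' : Finset (Fin k × Bool),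
      σ'.card * τ'.card * m ≤ nuS k n σ' τ' ∧
      nuS k n σ' τ' ≤ σ'.card * τ'.card * (m + 1)) := by
  obtain ⟨m, hm⟩ := key hk n hn
  refine ⟨m, fun σ' τ' => ?_⟩
  have hcard : (σ' ×ˢ τ').card = σ'.card * τ'.card := Finset.card_product σ' τ'
  rw [nuS_eq_sum]
  constructor
  · have h1 : ∑ _p ∈ σ' ×ˢ τ', m ≤ ∑ p ∈ σ' ×ˢ τ', nu k n p.1 p.2 := by
      apply Finset.sum_le_sum
      intro p _
      rw [nu_eq, hm p.1 p.2]
      omega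
    rwa [Finset.sum_const, hcard, smul_eq_mul] at h1
  · have h1 : ∑ p ∈ σ' ×ˢ τ', nu k n p.1 p.2 ≤ ∑ _p ∈ σ' ×ˢ τ', (m + 1) := by
      apply Finset.sum_le_sum
      intro p _
      rw [nu_eq, hm p.1 p.2]
      have := eN_le_one n p.1 p.2
      omega
    rwa [Finset.sum_const, hcard, smul_eq_mul] at h1

end NuAux

/-- for `k ≥ 2`, `n ≥ 2` and nonempty subsets `σ₁,σ₂,τ₁,τ₂ ⊆ S_k` with
`|σ₁| = |σ₂|` and `|τ₁| = |τ₂|`: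
`|ν_n(σ₁,τ₁) − ν_n(σ₂,τ₂)| ≤ 2|σ₁||τ₁|(2 + 3/(2k))`; in particular the difference is
at most `D_k = 8k²(2 + 3/(2k)) = 16k² + 12k`. -/
theorem nuS_diff_bound (k : ℕ) (hk : 2 ≤ k) (n : ℕ) (hn : 2 ≤ n)
    (σ₁ σ₂ τ₁ τ₂ : Finset (Fin k × Bool))
    (hσ₁ : σ₁.Nonempty) (hσ₂ : σ₂.Nonempty) (hτ₁ : τ₁.Nonempty) (hτ₂ : τ₂.Nonempty)
    (hσ : σ₁.card = σ₂.card) (hτ : τ₁.card = τ₂.card) :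
    |(nuS k n σ₁ τ₁ : ℝ) - nuS k n σ₂ τ₂| ≤ 2 * σ₁.card * τ₁.card * (2 + 3 / (2 * k)) ∧
    |(nuS k n σ₁ τ₁ : ℝ) - nuS k n σ₂ τ₂| ≤ 16 * k ^ 2 + 12 * k := by
  obtain ⟨m, hm⟩ := NuAux.nuS_bounds hk n hn
  obtain ⟨l1, u1⟩ := hm σ₁ τ₁
  obtain ⟨l2, u2⟩ := hm σ₂ τ₂
  rw [← hσ, ← hτ] at l2 u2
  have c1 := (Nat.cast_le (α := ℝ)).mpr l1
  have c2 := (Nat.cast_le (α := ℝ)).mpr u1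
  have c3 := (Nat.cast_le (α := ℝ)).mpr l2
  have c4 := (Nat.cast_le (α := ℝ)).mpr u2
  push_cast at c1 c2 c3 c4
  have habs : |(nuS k n σ₁ τ₁ : ℝ) - nuS k n σ₂ τ₂| ≤ (σ₁.card : ℝ) * τ₁.card := by
    rw [abs_le]
    constructor <;> linarith
  have hkR : (2 : ℝ) ≤ (k : ℝ) := by exact_mod_cast hk
  have hs0 : (0:ℝ) ≤ (σ₁.card : ℝ) := by positivity
  have ht0 : (0:ℝ) ≤ (τ₁.card : ℝ) := by positivity
  have hs2k : (σ₁.card : ℝ) ≤ 2 * k := by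
    have h := Finset.card_le_univ σ₁
    have h2 : Fintype.card (Fin k × Bool) = 2 * k := by simp [mul_comm]
    rw [h2] at h
    exact_mod_cast h
  have ht2k : (τ₁.card : ℝ) ≤ 2 * k := by
    have h := Finset.card_le_univ τ₁
    have h2 : Fintype.card (Fin k × Bool) = 2 * k := by simp [mul_comm]
    rw [h2] at h
    exact_mod_cast h
  constructor
  · refine habs.trans ?_
    have h3 : (0:ℝ) ≤ 3 / (2 * k) := by positivity
    nlinarith [mul_nonneg (mul_nonneg hs0 ht0) h3]
  · refine habs.trans ?_
    have h4 : (σ₁.card : ℝ) * τ₁.card ≤ (2 * k) * (2 * k) :=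
      mul_le_mul hs2k ht2k ht0 (by linarith)
    nlinarith

end
end

section
/- Let x = x_ℓ⋯x_1 and y = y_1⋯y_m be reduced words in F_k of lengths ℓ ≥ 1 and m ≥ 1. Then for all n ≥ ℓ + m + 2, all 0 ≤ r ≤ ℓ and all 0 ≤ s ≤ m: μ(r,s,n;x,y) = ν_{n−r−s}(σ_r(x), τ_s(y)). -/
/-!
Common setup: `Fk k` is the free group `F_k` on `k` generators; letters of the
alphabet `S_k = {g_1,…,g_k,g_1⁻¹,…,g_k⁻¹}` are encoded as pairs in `Fin k × Bool`
(`(i, true)` is `g_{i+1}`, `(i, false)` is `g_{i+1}⁻¹`); `wlen u` is the length of the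
unique reduced word representing `u`; `words k n` is the (finite) set of elements of
length `n`; `w k n` is `w_n`, the sum of all reduced words of length `n` in the group
algebra `ℂ[F_k] = MonoidAlgebra ℂ (Fk k)`.
-/

open scoped BigOperators

noncomputable section

/-- The letter `x_j` of a reduced word `x = x_ℓ ⋯ x_1` of length `ℓ` (indices as in the
paper: `x_ℓ` is the first letter of `x` and `x_1` is the last one, so `x_j` is the entry
at position `ℓ - j` of the list of letters of `x`). -/
def xLetter {k : ℕ} (x : Fk k) (j : ℕ) : Option (Fin k × Bool) :=
  (FreeGroup.toWord x)[(FreeGroup.toWord x).length - j]?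

/-- The letter `y_j` of a reduced word `y = y_1 ⋯ y_m` (here `y_1` is the first letter of
`y` and `y_m` the last one). -/
def yLetter {k : ℕ} (y : Fk k) (j : ℕ) : Option (Fin k × Bool) :=
  (FreeGroup.toWord y)[j - 1]?

/-- `σ_r(x)`: for `x = x_ℓ ⋯ x_1` this is `S_k ∖ {x_{r+1}⁻¹, x_r}`, where the element
`x_{r+1}⁻¹` is omitted when `r = ℓ`, and `x_r` is omitted when `r = 0`.  In particular
`σ_0(x) = S_k ∖ {x_1⁻¹}` and `σ_ℓ(x) = S_k ∖ {x_ℓ}`. -/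
def sigmaF {k : ℕ} (x : Fk k) (r : ℕ) : Finset (Fin k × Bool) :=
  Finset.univ \
    ((if r < (FreeGroup.toWord x).length then xLetter x (r + 1) else none).toFinset.image linv ∪
      (if 0 < r then xLetter x r else none).toFinset)

/-- `τ_s(y)`: for `y = y_1 ⋯ y_m` this is `S_k ∖ {y_{s+1}⁻¹, y_s}`, where the element
`y_{s+1}⁻¹` is omitted when `s = m`, and `y_s` is omitted when `s = 0`.  In particular
`τ_0(y) = S_k ∖ {y_1⁻¹}` and `τ_m(y) = S_k ∖ {y_m}`. -/
def tauF {k : ℕ} (y : Fk k) (s : ℕ) : Finset (Fin k × Bool) :=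
  Finset.univ \
    ((if s < (FreeGroup.toWord y).length then yLetter y (s + 1) else none).toFinset.image linv ∪
      (if 0 < s then yLetter y s else none).toFinset)

/-- `μ(r,s,n;x,y)`: the number of reduced words `u` of length `n` such that in the
product `x·u·y` exactly `r` cancellations occur on the left and exactly `s` occur on the
right, i.e. `|xu| = |x| + n − 2r` and `|uy| = n + |y| − 2s`. -/
def mu (k r s n : ℕ) (x y : Fk k) : ℕ :=
  ((words k n).filter (fun u =>
    wlen (x * u) = wlen x + n - 2 * r ∧ wlen (u * y) = n + wlen y - 2 * s)).card

set_option linter.unusedSectionVars false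
set_option maxHeartbeats 1000000

section ListHelpers

open FreeGroup List

variable {α : Type*} [DecidableEq α]

/-- no-cancellation relation between adjacent letters -/
def Rr (a b : α × Bool) : Prop := b ≠ (a.1, !a.2)

lemma chain'_reduce (L : List (α × Bool)) : List.Chain' Rr (reduce L) := by
  induction L with
  | nil => exact List.isChain_nil
  | cons x L ih =>
    rw [reduce.cons]
    rcases h : reduce L with _ | ⟨hd, tl⟩
    · exact List.isChain_singleton _
    · rw [h] at ih
      by_cases hc : x.1 = hd.1 ∧ x.2 = !hd.2
      · simp only [hc, if_pos, and_self, reduceIte]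
        exact ih.tail
      · simp only [hc, if_neg, reduceIte]
        refine List.isChain_cons_cons.2 ⟨?_, ih⟩
        intro he
        apply hc
        subst he
        simp

lemma reduce_eq_of_chain' {L : List (α × Bool)} (h : List.Chain' Rr L) : reduce L = L := by
  induction L with
  | nil => simp
  | cons x L ih =>
    rw [reduce.cons, ih h.tail]
    rcases L with _ | ⟨hd, tl⟩
    · rfl
    · have hx : Rr x hd := List.isChain_cons_cons.1 h |>.1
      have : ¬ (x.1 = hd.1 ∧ x.2 = !hd.2) := by
        rintro ⟨h1, h2⟩
        exact hx (by cases x; cases hd; simp_all)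
      simp [this]

lemma reduce_eq_iff {L : List (α × Bool)} : reduce L = L ↔ List.Chain' Rr L :=
  ⟨fun h => h ▸ chain'_reduce L, reduce_eq_of_chain'⟩

lemma invRev_append' (L1 L2 : List (α × Bool)) :
    invRev (L1 ++ L2) = invRev L2 ++ invRev L1 := by simp [invRev]

lemma split_lemma (X : List (α × Bool)) :
    ∀ U : List (α × Bool), List.Chain' Rr X → List.Chain' Rr U →
    ∃ c, c ≤ X.length ∧ c ≤ U.length ∧
      U.take c = invRev (X.drop (X.length - c)) ∧
      reduce (X ++ U) = X.take (X.length - c) ++ U.drop c := by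
  induction X using List.reverseRecOn with
  | nil =>
    intro U _ hU
    exact ⟨0, by simp [reduce_eq_of_chain' hU, invRev]⟩
  | append_singleton X' a ih =>
    intro U hX hU
    rcases U with _ | ⟨b, U'⟩
    · exact ⟨0, by simp [reduce_eq_of_chain' hX, invRev]⟩
    by_cases hb : b = (a.1, !a.2)
    · subst hb
      obtain ⟨c, hc1, hc2, hc3, hc4⟩ := ih U' (hX.prefix ⟨[a], rfl⟩) hU.tail
      have hlen : X'.length - c ≤ X'.length := Nat.sub_le _ _
      refine ⟨c + 1, by simp; omega, by simp; omega, ?_, ?_⟩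
      · rw [List.length_append, List.length_singleton]
        have : X'.length + 1 - (c + 1) = X'.length - c := by omega
        rw [this, List.drop_append_of_le_length hlen, invRev_append']
        simp only [List.take_succ_cons, hc3, invRev]
        simp
      · have hstep : reduce ((X' ++ [a]) ++ (a.1, !a.2) :: U') = reduce (X' ++ U') := by
          have : (X' ++ [a]) ++ (a.1, !a.2) :: U' = X' ++ (a.1, a.2) :: (a.1, !a.2) :: U' := by
            simp
          rw [this]
          exact reduce.Step.eq Red.Step.not
        rw [hstep, hc4, List.length_append, List.length_singleton]
        have : X'.length + 1 - (c + 1) = X'.length - c := by omega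
        rw [this, List.take_append_of_le_length hlen]
        simp
    · refine ⟨0, by simp, by simp, by simp [invRev], ?_⟩
      simp only [Nat.sub_zero, List.take_length, List.drop_zero]
      apply reduce_eq_of_chain'
      refine List.isChain_append.mpr ?_
      refine ⟨hX, hU, ?_⟩
      intro p hp q hq
      simp at hp hq
      subst hp; subst hq
      exact hb

lemma chain'_invRev {L : List (α × Bool)} (h : List.Chain' Rr L) :
    List.Chain' Rr (invRev L) := by
  rw [← reduce_eq_iff] at h ⊢
  rw [FreeGroup.reduce_invRev, h]

lemma head?_invRev (L : List (α × Bool)) :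
    (invRev L).head? = L.getLast?.map (fun a => (a.1, !a.2)) := by
  simp [invRev]

lemma getLast?_invRev (L : List (α × Bool)) :
    (invRev L).getLast? = L.head?.map (fun a => (a.1, !a.2)) := by
  simp [invRev]

lemma head?_drop' (l : List (α × Bool)) (j : ℕ) : (l.drop j).head? = l[j]? := by
  rw [List.head?_eq_getElem?, List.getElem?_drop]
  simp

end ListHelpers

section FkHelpers

open FreeGroup List

lemma mem_words {k n : ℕ} (u : Fk k) : u ∈ words k n ↔ (FreeGroup.toWord u).length = n := by
  constructor
  · intro h
    simp only [words, Finset.mem_image, Finset.mem_filter] at h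
    obtain ⟨v, ⟨_, hv⟩, rfl⟩ := h
    rw [FreeGroup.toWord_mk, hv]
    exact v.2
  · intro h
    simp only [words, Finset.mem_image, Finset.mem_filter]
    exact ⟨⟨u.toWord, h⟩, ⟨Finset.mem_univ _, FreeGroup.reduce_toWord u⟩, FreeGroup.mk_toWord⟩

lemma mem_sigmaF_iff {k : ℕ} (x : Fk k) (r : ℕ) (a : Fin k × Bool) :
    a ∈ sigmaF x r ↔
      ((r < (FreeGroup.toWord x).length →
          ∀ b ∈ (FreeGroup.toWord x)[(FreeGroup.toWord x).length - (r+1)]?, a ≠ (b.1, !b.2)) ∧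
       (0 < r → ∀ b ∈ (FreeGroup.toWord x)[(FreeGroup.toWord x).length - r]?, a ≠ b)) := by
  unfold sigmaF xLetter linv
  generalize FreeGroup.toWord x = X
  simp only [Finset.mem_sdiff, Finset.mem_univ, true_and, Finset.mem_union, not_or,
    Finset.mem_image, Option.mem_toFinset, Option.mem_def, not_exists]
  constructor
  · rintro ⟨h1, h2⟩
    refine ⟨fun hrl b hb heq => ?_, fun hr0 b hb heq => ?_⟩
    · exact h1 b ⟨by rwa [if_pos hrl], heq.symm⟩
    · rw [if_pos hr0] at h2
      exact h2 (heq ▸ hb)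
  · rintro ⟨h1, h2⟩
    constructor
    · intro b
      rintro ⟨hb, rfl⟩
      by_cases hrl : r < X.length
      · rw [if_pos hrl] at hb
        exact h1 hrl b hb rfl
      · rw [if_neg hrl] at hb
        cases hb
    · intro hsome
      by_cases hr0 : 0 < r
      · rw [if_pos hr0] at hsome
        exact h2 hr0 a hsome rfl
      · rw [if_neg hr0] at hsome
        cases hsome

lemma mem_tauF_iff {k : ℕ} (y : Fk k) (s : ℕ) (b : Fin k × Bool) :
    b ∈ tauF y s ↔
      ((s < (FreeGroup.toWord y).length →
          ∀ q ∈ (FreeGroup.toWord y)[s]?, b ≠ (q.1, !q.2)) ∧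
       (0 < s → ∀ q ∈ (FreeGroup.toWord y)[s-1]?, b ≠ q)) := by
  unfold tauF yLetter linv
  generalize FreeGroup.toWord y = Y
  simp only [Nat.add_sub_cancel, Finset.mem_sdiff, Finset.mem_univ, true_and, Finset.mem_union,
    not_or, Finset.mem_image, Option.mem_toFinset, Option.mem_def, not_exists]
  constructor
  · rintro ⟨h1, h2⟩
    refine ⟨fun hrl q hb heq => ?_, fun hr0 q hb heq => ?_⟩
    · exact h1 q ⟨by rwa [if_pos hrl], heq.symm⟩
    · rw [if_pos hr0] at h2
      exact h2 (heq ▸ hb)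
  · rintro ⟨h1, h2⟩
    constructor
    · intro q
      rintro ⟨hb, rfl⟩
      by_cases hrl : s < Y.length
      · rw [if_pos hrl] at hb
        exact h1 hrl q hb rfl
      · rw [if_neg hrl] at hb
        cases hb
    · intro hsome
      by_cases hr0 : 0 < s
      · rw [if_pos hr0] at hsome
        exact h2 hr0 b hsome rfl
      · rw [if_neg hr0] at hsome
        cases hsome

end FkHelpers


/-- let `x = x_ℓ⋯x_1` and `y = y_1⋯y_m` be reduced words in `F_k` of
lengths `ℓ ≥ 1` and `m ≥ 1`.  Then for all `n ≥ ℓ + m + 2`, `0 ≤ r ≤ ℓ`, `0 ≤ s ≤ m`: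
`μ(r,s,n;x,y) = ν_{n−r−s}(σ_r(x), τ_s(y))`. -/
theorem mu_eq_nuS (k : ℕ) (hk : 2 ≤ k) (x y : Fk k) (ℓ m : ℕ)
    (hx : wlen x = ℓ) (hy : wlen y = m) (hℓ : 1 ≤ ℓ) (hm : 1 ≤ m)
    (n r s : ℕ) (hn : ℓ + m + 2 ≤ n) (hr : r ≤ ℓ) (hs : s ≤ m) :
    mu k r s n x y = nuS k (n - r - s) (sigmaF x r) (tauF y s) := by
  classical
  open FreeGroup List in
  have lX : (FreeGroup.toWord x).length = ℓ := hx
  have lY : (FreeGroup.toWord y).length = m := hy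
  have hXc : List.Chain' Rr x.toWord := reduce_eq_iff.mp (FreeGroup.reduce_toWord x)
  have hYc : List.Chain' Rr y.toWord := reduce_eq_iff.mp (FreeGroup.reduce_toWord y)
  set P1 : List (Fin k × Bool) := FreeGroup.invRev (x.toWord.drop (ℓ - r)) with hP1def
  set P3 : List (Fin k × Bool) := FreeGroup.invRev (y.toWord.take s) with hP3def
  have lP1 : P1.length = r := by
    rw [hP1def, FreeGroup.invRev_length, List.length_drop, lX]; omega
  have lP3 : P3.length = s := by
    rw [hP3def, FreeGroup.invRev_length, List.length_take, lY]; omega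
  have hP1c : List.Chain' Rr P1 := chain'_invRev (hXc.suffix (List.drop_suffix _ _))
  have hP3c : List.Chain' Rr P3 := chain'_invRev (hYc.prefix (List.take_prefix _ _))
  -- forward analysis
  have main_fwd : ∀ u ∈ (words k n).filter (fun u =>
      wlen (x * u) = wlen x + n - 2 * r ∧ wlen (u * y) = n + wlen y - 2 * s),
      FreeGroup.toWord u = P1 ++ (((FreeGroup.toWord u).drop r).take (n - r - s) ++ P3) ∧
      List.Chain' Rr (((FreeGroup.toWord u).drop r).take (n - r - s)) ∧
      FreeGroup.mk (((FreeGroup.toWord u).drop r).take (n - r - s)) ∈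
        (words k (n - r - s)).filter (fun v =>
          (∃ a ∈ sigmaF x r, firstLetter v = some a) ∧
          (∃ b ∈ tauF y s, lastLetter v = some b)) := by
    intro u hu
    rw [Finset.mem_filter] at hu
    obtain ⟨huw, h1, h2⟩ := hu
    have lU : u.toWord.length = n := (mem_words u).1 huw
    have hUc : List.Chain' Rr u.toWord := reduce_eq_iff.mp (FreeGroup.reduce_toWord u)
    obtain ⟨c, hc1, hc2, hc3, hc4⟩ := split_lemma x.toWord u.toWord hXc hUc
    have hxu : (x * u).toWord = FreeGroup.reduce (x.toWord ++ u.toWord) := by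
      rw [← FreeGroup.toWord_mk, ← FreeGroup.mul_mk, FreeGroup.mk_toWord, FreeGroup.mk_toWord]
    have hcr : c = r := by
      have hl := congrArg List.length hxu
      rw [hc4] at hl
      simp only [List.length_append, List.length_take, List.length_drop] at hl
      unfold wlen at h1
      rw [lX, lU] at hl
      rw [lX] at h1
      rw [lX] at hc1
      rw [lU] at hc2
      omega
    rw [hcr] at hc1 hc2 hc3 hc4
    rw [lX] at hc1 hc3 hc4
    rw [lU] at hc2
    obtain ⟨d, hd1, hd2, hd3, hd4⟩ := split_lemma u.toWord y.toWord hUc hYc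
    have huy : (u * y).toWord = FreeGroup.reduce (u.toWord ++ y.toWord) := by
      rw [← FreeGroup.toWord_mk, ← FreeGroup.mul_mk, FreeGroup.mk_toWord, FreeGroup.mk_toWord]
    have hds : d = s := by
      have hl := congrArg List.length huy
      rw [hd4] at hl
      simp only [List.length_append, List.length_take, List.length_drop] at hl
      unfold wlen at h2
      rw [lU, lY] at hl
      rw [lY] at h2
      rw [lU] at hd1
      rw [lY] at hd2
      omega
    rw [hds] at hd1 hd2 hd3 hd4
    rw [lU] at hd1 hd4
    rw [lY] at hd2
    set V := (u.toWord.drop r).take (n - r - s) with hVdef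
    have lV : V.length = n - r - s := by
      rw [hVdef, List.length_take, List.length_drop, lU]; omega
    have hVne : V ≠ [] := List.ne_nil_of_length_pos (by rw [lV]; omega)
    have hP3e : P3 = u.toWord.drop (n - s) := by
      rw [hP3def, hd3, lU, FreeGroup.invRev_invRev]
    have hdec : u.toWord = P1 ++ (V ++ P3) := by
      rw [hP3e, hP1def, ← hc3]
      show u.toWord = u.toWord.take r ++
        ((u.toWord.drop r).take (n - r - s) ++ u.toWord.drop (n - s))
      conv_lhs => rw [← List.take_append_drop r u.toWord]
      congr 1
      conv_lhs => rw [← List.take_append_drop (n - r - s) (u.toWord.drop r)]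
      congr 1
      rw [List.drop_drop]
      congr 1
      omega
    have hVc : List.Chain' Rr V :=
      (hUc.suffix (List.drop_suffix r u.toWord)).prefix (List.take_prefix (n - r - s) _)
    refine ⟨hdec, hVc, ?_⟩
    rw [Finset.mem_filter]
    have hVtoword : (FreeGroup.mk V).toWord = V := by
      rw [FreeGroup.toWord_mk, reduce_eq_of_chain' hVc]
    have hab : (u.toWord.drop r).head? = some (V.head hVne) := by
      conv_lhs => rw [← List.take_append_drop (n - r - s) (u.toWord.drop r)]
      rw [List.head?_append, ← hVdef, List.head?_eq_head hVne]
      rfl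
    have hba : (u.toWord.take (n - s)).getLast? = some (V.getLast hVne) := by
      have he : u.toWord.take (n - s) = P1 ++ V := by
        conv_lhs => rw [hdec]
        rw [← List.append_assoc,
          List.take_left' (by rw [List.length_append, lP1, lV]; omega)]
      rw [he, List.getLast?_append, List.getLast?_eq_getLast hVne]
      rfl
    refine ⟨(mem_words _).2 (by rw [hVtoword, lV]), ⟨V.head hVne, ?_, ?_⟩,
      ⟨V.getLast hVne, ?_, ?_⟩⟩
    · rw [mem_sigmaF_iff, lX]
      constructor
      · intro hrl b hb
        have hch : List.Chain' Rr (x.toWord.take (ℓ - r) ++ u.toWord.drop r) :=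
          hc4 ▸ chain'_reduce _
        have hj := (List.isChain_append.mp hch).2.2
        have hlast : (x.toWord.take (ℓ - r)).getLast? = some b := by
          rw [List.getLast?_eq_getElem?, List.length_take, lX]
          have h5 : min (ℓ - r) ℓ - 1 = ℓ - (r + 1) := by omega
          rw [h5, List.getElem?_take_of_lt (by omega)]
          exact hb
        exact hj b hlast _ hab
      · intro hr0 b hb
        have hch : List.Chain' Rr (u.toWord.take r ++ u.toWord.drop r) := by
          rw [List.take_append_drop]; exact hUc
        have hj := (List.isChain_append.mp hch).2.2
        have hlast : (u.toWord.take r).getLast? = some (b.1, !b.2) := by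
          rw [hc3, getLast?_invRev, head?_drop']
          rw [Option.mem_def] at hb
          rw [hb]
          rfl
        have h6 := hj _ hlast _ hab
        simp only [Rr, Bool.not_not] at h6
        simpa using h6
    · rw [firstLetter, hVtoword, List.head?_eq_head]
    · rw [mem_tauF_iff, lY]
      constructor
      · intro hsm q hq
        have hch : List.Chain' Rr (u.toWord.take (n - s) ++ y.toWord.drop s) :=
          hd4 ▸ chain'_reduce _
        have hj := (List.isChain_append.mp hch).2.2
        have hhead : (y.toWord.drop s).head? = some q := by rw [head?_drop']; exact hq
        have h6 := hj _ hba _ hhead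
        intro heq
        apply h6
        rw [heq]
        simp
      · intro hs0 q hq
        have hch : List.Chain' Rr (u.toWord.take (n - s) ++ u.toWord.drop (n - s)) := by
          rw [List.take_append_drop]; exact hUc
        have hj := (List.isChain_append.mp hch).2.2
        have hhead : (u.toWord.drop (n - s)).head? = some (q.1, !q.2) := by
          rw [← hP3e, hP3def, head?_invRev]
          have h7 : (y.toWord.take s).getLast? = some q := by
            rw [List.getLast?_eq_getElem?, List.length_take, lY]
            have h8 : min s m - 1 = s - 1 := by omega
            rw [h8, List.getElem?_take_of_lt (by omega)]
            exact hq
          rw [h7]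
          rfl
        have h6 := hj _ hba _ hhead
        intro heq
        apply h6
        rw [heq]
    · rw [lastLetter, hVtoword, List.getLast?_eq_getLast hVne]
  -- backward analysis
  have main_bwd : ∀ v ∈ (words k (n - r - s)).filter (fun v =>
        (∃ a ∈ sigmaF x r, firstLetter v = some a) ∧
        (∃ b ∈ tauF y s, lastLetter v = some b)),
      List.Chain' Rr (P1 ++ (FreeGroup.toWord v ++ P3)) ∧
      FreeGroup.mk (P1 ++ (FreeGroup.toWord v ++ P3)) ∈ (words k n).filter (fun u =>
        wlen (x * u) = wlen x + n - 2 * r ∧ wlen (u * y) = n + wlen y - 2 * s) := by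
    intro v hv
    rw [Finset.mem_filter] at hv
    obtain ⟨hvw, ⟨a, haσ, hafirst⟩, ⟨b, hbτ, hblast⟩⟩ := hv
    have lv : v.toWord.length = n - r - s := (mem_words v).1 hvw
    have hVc : List.Chain' Rr v.toWord := reduce_eq_iff.mp (FreeGroup.reduce_toWord v)
    have hVne : v.toWord ≠ [] := List.ne_nil_of_length_pos (by rw [lv]; omega)
    rw [firstLetter] at hafirst
    rw [lastLetter] at hblast
    rw [mem_sigmaF_iff, lX] at haσ
    obtain ⟨ha1, ha2⟩ := haσ
    rw [mem_tauF_iff, lY] at hbτ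
    obtain ⟨hb1, hb2⟩ := hbτ
    have hheadVP3 : (v.toWord ++ P3).head? = some a := by
      rw [List.head?_append, hafirst]
      rfl
    have jP1V : ∀ pp ∈ P1.getLast?, ∀ q ∈ (v.toWord ++ P3).head?, Rr pp q := by
      intro pp hpp q hq
      rw [hheadVP3, Option.mem_def, Option.some_inj] at hq
      subst hq
      rw [Option.mem_def, hP1def, getLast?_invRev, head?_drop'] at hpp
      obtain ⟨b0, hb0, rfl⟩ := Option.map_eq_some_iff.mp hpp
      have hr0 : 0 < r := by
        by_contra hcon
        have : ℓ - r = ℓ := by omega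
        rw [this, List.getElem?_eq_none (by rw [lX])] at hb0
        cases hb0
      have h6 := ha2 hr0 b0 hb0
      intro heq
      apply h6
      rw [heq]
      simp
    have jVP3 : ∀ pp ∈ v.toWord.getLast?, ∀ q ∈ P3.head?, Rr pp q := by
      intro pp hpp q hq
      rw [hblast, Option.mem_def, Option.some_inj] at hpp
      subst hpp
      rw [Option.mem_def, hP3def, head?_invRev] at hq
      obtain ⟨q0, hq0, rfl⟩ := Option.map_eq_some_iff.mp hq
      have hs0 : 0 < s := by
        by_contra hcon
        have : s = 0 := by omega
        rw [this] at hq0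
        simp at hq0
      have hq0' : (FreeGroup.toWord y)[s - 1]? = some q0 := by
        rw [List.getLast?_eq_getElem?, List.length_take, lY] at hq0
        have h8 : min s m - 1 = s - 1 := by omega
        rw [h8, List.getElem?_take_of_lt (by omega)] at hq0
        exact hq0
      have h6 := hb2 hs0 q0 hq0'
      intro heq
      apply h6
      rw [Prod.mk.injEq] at heq
      have h8 : q0.2 = b.2 := by simpa using heq.2
      exact Prod.ext_iff.mpr ⟨heq.1.symm, h8.symm⟩
    have hUc : List.Chain' Rr (P1 ++ (v.toWord ++ P3)) := by
      refine List.isChain_append.mpr ?_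
      refine ⟨hP1c, ?_, jP1V⟩
      refine List.isChain_append.mpr ?_
      exact ⟨hVc, hP3c, jVP3⟩
    refine ⟨hUc, ?_⟩
    rw [Finset.mem_filter]
    have hUw : (FreeGroup.mk (P1 ++ (v.toWord ++ P3))).toWord = P1 ++ (v.toWord ++ P3) := by
      rw [FreeGroup.toWord_mk, reduce_eq_of_chain' hUc]
    refine ⟨(mem_words _).2 (by
        rw [hUw, List.length_append, List.length_append, lP1, lP3, lv]; omega), ?_, ?_⟩
    · -- left length condition
      have e1 : x = FreeGroup.mk (x.toWord.take (ℓ - r)) * FreeGroup.mk (x.toWord.drop (ℓ - r)) := by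
        rw [FreeGroup.mul_mk, List.take_append_drop, FreeGroup.mk_toWord]
      have e2 : FreeGroup.mk (P1 ++ (v.toWord ++ P3)) =
          (FreeGroup.mk (x.toWord.drop (ℓ - r)))⁻¹ * FreeGroup.mk (v.toWord ++ P3) := by
        rw [FreeGroup.inv_mk, FreeGroup.mul_mk, hP1def]
      have hgrp : x * FreeGroup.mk (P1 ++ (v.toWord ++ P3)) =
          FreeGroup.mk (x.toWord.take (ℓ - r) ++ (v.toWord ++ P3)) := by
        conv_lhs => rw [e1, e2]
        rw [mul_assoc, mul_inv_cancel_left, FreeGroup.mul_mk]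
      have hch : List.Chain' Rr (x.toWord.take (ℓ - r) ++ (v.toWord ++ P3)) := by
        refine List.isChain_append.mpr ?_
        refine ⟨hXc.prefix (List.take_prefix _ _), hUc.suffix (List.suffix_append _ _), ?_⟩
        intro pp hpp q hq
        rw [hheadVP3, Option.mem_def, Option.some_inj] at hq
        subst hq
        rw [Option.mem_def, List.getLast?_eq_getElem?, List.length_take, lX] at hpp
        have hrl : r < ℓ := by
          by_contra hcon
          have : ℓ - r = 0 := by omega
          rw [this] at hpp
          simp at hpp
        have h5 : min (ℓ - r) ℓ - 1 = ℓ - (r + 1) := by omega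
        rw [h5, List.getElem?_take_of_lt (by omega)] at hpp
        exact ha1 hrl pp hpp
      unfold wlen
      rw [hgrp, FreeGroup.toWord_mk, reduce_eq_of_chain' hch, lX,
        List.length_append, List.length_append, List.length_take, lX, lP3, lv]
      omega
    · -- right length condition
      have e3 : y = FreeGroup.mk (y.toWord.take s) * FreeGroup.mk (y.toWord.drop s) := by
        rw [FreeGroup.mul_mk, List.take_append_drop, FreeGroup.mk_toWord]
      have e4 : FreeGroup.mk (P1 ++ (v.toWord ++ P3)) =
          FreeGroup.mk (P1 ++ v.toWord) * (FreeGroup.mk (y.toWord.take s))⁻¹ := by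
        rw [FreeGroup.inv_mk, FreeGroup.mul_mk, hP3def, List.append_assoc]
      have hgrp : FreeGroup.mk (P1 ++ (v.toWord ++ P3)) * y =
          FreeGroup.mk ((P1 ++ v.toWord) ++ y.toWord.drop s) := by
        conv_lhs => rw [e3, e4]
        rw [mul_assoc, inv_mul_cancel_left, FreeGroup.mul_mk]
      have hgetlast : (P1 ++ v.toWord).getLast? = some b := by
        rw [List.getLast?_append, hblast]
        rfl
      have hch : List.Chain' Rr ((P1 ++ v.toWord) ++ y.toWord.drop s) := by
        refine List.isChain_append.mpr ?_
        refine ⟨?_, hYc.suffix (List.drop_suffix _ _), ?_⟩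
        · rw [← List.append_assoc] at hUc
          exact hUc.prefix (List.prefix_append _ _)
        · intro pp hpp q hq
          rw [hgetlast, Option.mem_def, Option.some_inj] at hpp
          subst hpp
          rw [Option.mem_def, head?_drop'] at hq
          have hsm : s < m := by
            by_contra hcon
            have : s = m := by omega
            rw [this, List.getElem?_eq_none (by rw [lY])] at hq
            cases hq
          have h6 := hb1 hsm q hq
          intro heq
          apply h6
          rw [heq]
          simp
      unfold wlen
      rw [hgrp, FreeGroup.toWord_mk, reduce_eq_of_chain' hch, lY,
        List.length_append, List.length_append, List.length_drop, lY, lP1, lv]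
      omega
  -- the bijection
  unfold mu nuS
  refine Finset.card_bij'
    (fun u _ => FreeGroup.mk (((FreeGroup.toWord u).drop r).take (n - r - s)))
    (fun v _ => FreeGroup.mk (P1 ++ (FreeGroup.toWord v ++ P3)))
    (fun u hu => (main_fwd u hu).2.2) (fun v hv => (main_bwd v hv).2) ?_ ?_
  · intro u hu
    obtain ⟨hdec, hVc, -⟩ := main_fwd u hu
    rw [FreeGroup.toWord_mk, reduce_eq_of_chain' hVc, ← hdec, FreeGroup.mk_toWord]
  · intro v hv
    obtain ⟨hUc, -⟩ := main_bwd v hv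
    have lv : v.toWord.length = n - r - s :=
      (mem_words v).1 (Finset.mem_filter.mp hv).1
    rw [FreeGroup.toWord_mk, reduce_eq_of_chain' hUc, List.drop_left' lP1,
      List.take_left' lv, FreeGroup.mk_toWord]


end
end

section
/- With the free product notation, let x, y ∈ G with x ∉ φ(F_k) and y ∉ φ(F_k). Then for every n ≥ 0 the set χ_n = {u ∈ F_k : |u| = n and x·φ(u)·y ∈ φ(F_k)} is finite with cardinality at most (n+1)(2n+1). -/
/-!
Common setup: `Fk k` is the free group `F_k` on `k` generators; letters of the
alphabet `S_k = {g_1,…,g_k,g_1⁻¹,…,g_k⁻¹}` are encoded as pairs in `Fin k × Bool`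
(`(i, true)` is `g_{i+1}`, `(i, false)` is `g_{i+1}⁻¹`); `wlen u` is the length of the
unique reduced word representing `u`; `words k n` is the (finite) set of elements of
length `n`; `w k n` is `w_n`, the sum of all reduced words of length `n` in the group
algebra `ℂ[F_k] = MonoidAlgebra ℂ (Fk k)`.
-/

open scoped BigOperators

noncomputable section

open Monoid.CoprodI
set_option linter.unusedSectionVars false
namespace Chi15Aux

variable {m : ℕ} {G : Fin m → Type*} [∀ i, Group (G i)] [∀ i, DecidableEq (G i)]

/-- The list of letters of the normal form of an element of the free product. -/
def letters (z : Monoid.CoprodI G) : List (Σ i, G i) := (Word.equiv z).toList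

/-- Product of a list of letters. -/
def listProd (L : List (Σ i, G i)) : Monoid.CoprodI G := (L.map fun l => of l.2).prod

theorem prod_letters (z : Monoid.CoprodI G) : listProd (letters z) = z :=
  (Word.equiv (M := G)).left_inv z

theorem letters_ne_one (z : Monoid.CoprodI G) : ∀ l ∈ letters z, l.2 ≠ 1 :=
  (Word.equiv z).ne_one

theorem letters_chain' (z : Monoid.CoprodI G) :
    (letters z).Chain' fun l l' => l.1 ≠ l'.1 :=
  (Word.equiv z).chain_ne

theorem letters_listProd (L : List (Σ i, G i)) (h1 : ∀ l ∈ L, l.2 ≠ 1)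
    (h2 : L.Chain' fun l l' => l.1 ≠ l'.1) : letters (listProd L) = L := by
  exact congrArg Word.toList ((Word.equiv (M := G)).right_inv ⟨L, h1, h2⟩)

theorem letters_one : letters (1 : Monoid.CoprodI G) = [] := by
  have := letters_listProd ([] : List (Σ i, G i)) (by simp) List.isChain_nil
  simpa [listProd] using this

theorem letters_eq_nil_iff {z : Monoid.CoprodI G} : letters z = [] ↔ z = 1 := by
  constructor
  · intro h
    have := prod_letters z
    rw [h] at this
    simpa [listProd] using this.symm
  · rintro rfl; exact letters_one

theorem letters_of {i : Fin m} (a : G i) (ha : a ≠ 1) :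
    letters (of a) = [⟨i, a⟩] := by
  have := letters_listProd [⟨i, a⟩] (by simpa) (List.isChain_singleton _)
  simpa [listProd] using this

/-- Junction lemma: if the last letter of `z₁` and first letter of `z₂` lie in different
factors, the normal form of `z₁ * z₂` is the concatenation. -/
theorem letters_mul (z₁ z₂ : Monoid.CoprodI G)
    (h : ∀ a ∈ (letters z₁).getLast?, ∀ b ∈ (letters z₂).head?, a.1 ≠ b.1) :
    letters (z₁ * z₂) = letters z₁ ++ letters z₂ := by
  have h1 : ∀ l ∈ letters z₁ ++ letters z₂, l.2 ≠ 1 := by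
    intro l hl
    rcases List.mem_append.1 hl with hl | hl
    · exact letters_ne_one z₁ l hl
    · exact letters_ne_one z₂ l hl
  have h2 : (letters z₁ ++ letters z₂).Chain' fun l l' => l.1 ≠ l'.1 :=
    List.IsChain.append (letters_chain' z₁) (letters_chain' z₂) h
  have := letters_listProd _ h1 h2
  rw [show listProd (letters z₁ ++ letters z₂) = z₁ * z₂ by
    simp [listProd, List.prod_append]
    rw [show (List.map (fun l => of l.2) (letters z₁)).prod = listProd (letters z₁) from rfl,
      show (List.map (fun l => of l.2) (letters z₂)).prod = listProd (letters z₂) from rfl,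
      prod_letters, prod_letters]] at this
  exact this


theorem chain'_of_concat_decomp {L T : List (Σ i, G i)} {a : Σ i, G i}
    (hz : L = T ++ [a]) (hch : L.Chain' fun l l' => l.1 ≠ l'.1) :
    T.Chain' (fun l l' => l.1 ≠ l'.1) ∧ ∀ b ∈ T.getLast?, b.1 ≠ a.1 := by
  rw [hz] at hch; have hch := List.isChain_append.1 hch
  exact ⟨hch.1, fun b hb => hch.2.2 b hb a (by simp)⟩

/-- Decompose an element along its last letter. -/
theorem decomp_last {z : Monoid.CoprodI G} {T : List (Σ i, G i)} {a : Σ i, G i}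
    (hz : letters z = T ++ [a]) :
    letters (listProd T) = T ∧ z = listProd T * of a.2 := by
  have hch := chain'_of_concat_decomp hz (letters_chain' z)
  have h1 : ∀ l ∈ T, l.2 ≠ 1 := fun l hl => letters_ne_one z l (by rw [hz]; simp [hl])
  refine ⟨letters_listProd T h1 hch.1, ?_⟩
  conv_lhs => rw [← prod_letters z, hz]
  simp [listProd, List.prod_append]

/-- Decompose an element along its first letter. -/
theorem decomp_head {z : Monoid.CoprodI G} {T : List (Σ i, G i)} {a : Σ i, G i}
    (hz : letters z = a :: T) :
    letters (listProd T) = T ∧ z = of a.2 * listProd T := by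
  have hch : T.Chain' fun l l' => l.1 ≠ l'.1 := by
    have := letters_chain' z; rw [hz] at this; exact this.tail
  have h1 : ∀ l ∈ T, l.2 ≠ 1 := fun l hl => letters_ne_one z l (by rw [hz]; simp [hl])
  refine ⟨letters_listProd T h1 hch, ?_⟩
  conv_lhs => rw [← prod_letters z, hz]
  simp [listProd]

/-- Right multiplication by a letter from a different factor than the last: append. -/
theorem letters_mul_of_append {z : Monoid.CoprodI G} {i : Fin m} {a : G i} (ha : a ≠ 1)
    (h : ∀ b ∈ (letters z).getLast?, b.1 ≠ i) :
    letters (z * of a) = letters z ++ [⟨i, a⟩] := by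
  rw [letters_mul z (of a) (by rw [letters_of a ha]; simpa using h), letters_of a ha]

/-- Right multiplication by a letter merging with the last letter. -/
theorem letters_mul_of_merge {z : Monoid.CoprodI G} {i : Fin m} {a h₀ : G i}
    {T : List (Σ i, G i)} (hz : letters z = T ++ [⟨i, h₀⟩]) (hne : h₀ * a ≠ 1) :
    letters (z * of a) = T ++ [⟨i, h₀ * a⟩] := by
  obtain ⟨hT, hzeq⟩ := decomp_last hz
  have hch := chain'_of_concat_decomp hz (letters_chain' z)
  rw [hzeq, mul_assoc, ← MonoidHom.map_mul]
  rw [letters_mul _ _ (by rw [hT, letters_of _ hne]; simpa using hch.2), hT,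
    letters_of _ hne]

/-- Right multiplication by a letter cancelling the last letter. -/
theorem letters_mul_of_cancel {z : Monoid.CoprodI G} {i : Fin m} {a h₀ : G i}
    {T : List (Σ i, G i)} (hz : letters z = T ++ [⟨i, h₀⟩]) (hc : h₀ * a = 1) :
    letters (z * of a) = T := by
  obtain ⟨hT, hzeq⟩ := decomp_last hz
  rw [hzeq, mul_assoc, ← MonoidHom.map_mul, hc, MonoidHom.map_one, mul_one, hT]

/-- Left multiplication by a letter from a different factor than the head: prepend. -/
theorem letters_of_mul_prepend {z : Monoid.CoprodI G} {i : Fin m} {a : G i} (ha : a ≠ 1)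
    (h : ∀ b ∈ (letters z).head?, (i : Fin m) ≠ b.1) :
    letters (of a * z) = ⟨i, a⟩ :: letters z := by
  rw [letters_mul (of a) z (by rw [letters_of a ha]; simpa using h), letters_of a ha]
  simp

/-- Left multiplication by a letter merging with the head letter. -/
theorem letters_of_mul_merge {z : Monoid.CoprodI G} {i : Fin m} {a h₀ : G i}
    {T : List (Σ i, G i)} (hz : letters z = ⟨i, h₀⟩ :: T) (hne : a * h₀ ≠ 1) :
    letters (of a * z) = ⟨i, a * h₀⟩ :: T := by
  obtain ⟨hT, hzeq⟩ := decomp_head hz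
  have hch : ∀ b ∈ T.head?, (i : Fin m) ≠ b.1 := by
    have := letters_chain' z; rw [hz] at this; have := List.isChain_cons.1 this
    exact fun b hb => this.1 b hb
  rw [hzeq, ← mul_assoc, ← MonoidHom.map_mul]
  rw [letters_mul _ _ (by rw [hT, letters_of _ hne]; simpa using hch),
    letters_of _ hne, hT]
  simp

/-- Left multiplication by a letter cancelling the head letter. -/
theorem letters_of_mul_cancel {z : Monoid.CoprodI G} {i : Fin m} {a h₀ : G i}
    {T : List (Σ i, G i)} (hz : letters z = ⟨i, h₀⟩ :: T) (hc : a * h₀ = 1) :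
    letters (of a * z) = T := by
  obtain ⟨hT, hzeq⟩ := decomp_head hz
  rw [hzeq, ← mul_assoc, ← MonoidHom.map_mul, hc, MonoidHom.map_one, one_mul, hT]


section Phi

variable {k : ℕ} (hkm : k ≤ m) (g : (i : Fin k) → G (Fin.castLE hkm i))
  (φ : FreeGroup (Fin k) →* Monoid.CoprodI G)

/-- sign of a boolean -/
def sg (s : Bool) : ℤ := cond s 1 (-1)

/-- The image in the free product of a free-group letter. -/
def lett (p : Fin k × Bool) : Monoid.CoprodI G := of ((g p.1) ^ (sg p.2))

/-- The image in the free product of a free-group word. -/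
def philist (L : List (Fin k × Bool)) : Monoid.CoprodI G := (L.map (lett hkm g)).prod

theorem philist_nil : philist hkm g [] = 1 := rfl

theorem philist_cons (p : Fin k × Bool) (L : List (Fin k × Bool)) :
    philist hkm g (p :: L) = lett hkm g p * philist hkm g L := by
  simp [philist]

theorem philist_append (L₁ L₂ : List (Fin k × Bool)) :
    philist hkm g (L₁ ++ L₂) = philist hkm g L₁ * philist hkm g L₂ := by
  simp [philist]

variable (hφ : ∀ i : Fin k, φ (FreeGroup.of i) = of (g i))

include hφ in
theorem phi_mk (L : List (Fin k × Bool)) : φ (FreeGroup.mk L) = philist hkm g L := by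
  induction L with
  | nil => rw [← FreeGroup.one_eq_mk, map_one, philist_nil]
  | cons p L ih =>
    have : FreeGroup.mk (p :: L) = FreeGroup.mk [p] * FreeGroup.mk L := by
      rw [FreeGroup.mul_mk]; rfl
    rw [this, map_mul, ih, philist_cons]
    congr 1
    rcases p with ⟨i, s⟩
    cases s
    · have : FreeGroup.mk [(i, false)] = (FreeGroup.of i)⁻¹ := by
        rw [show FreeGroup.of i = FreeGroup.mk [(i, true)] from rfl, FreeGroup.inv_mk]
        rfl
      rw [this, map_inv, hφ, lett]
      simp [sg]
    · have : FreeGroup.mk [(i, true)] = FreeGroup.of i := rfl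
      rw [this, hφ, lett]
      simp [sg]

include hφ in
theorem phi_eq_philist (u : FreeGroup (Fin k)) : φ u = philist hkm g (FreeGroup.toWord u) := by
  conv_lhs => rw [← FreeGroup.mk_toWord (x := u)]
  exact phi_mk hkm g φ hφ _

include hφ in
theorem philist_mem_range (L : List (Fin k × Bool)) : philist hkm g L ∈ Set.range φ :=
  ⟨FreeGroup.mk L, phi_mk hkm g φ hφ L⟩

include hφ in
theorem lett_mem_range (p : Fin k × Bool) : lett hkm g p ∈ Set.range φ := by
  have := philist_mem_range hkm g φ hφ [p]
  simpa [philist] using this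

/-- A good letter: a nonzero power of some `g i`. -/
def IsGood (l : Σ i, G i) : Prop := ∃ (j : Fin k) (c : ℤ), l = ⟨Fin.castLE hkm j, (g j) ^ c⟩

variable (hg : ∀ i, ¬ IsOfFinOrder (g i))

include hg in
theorem g_zpow_inj {i : Fin k} {a b : ℤ} (h : (g i) ^ a = (g i) ^ b) : a = b := by
  have := injective_zpow_iff_not_isOfFinOrder.2 (hg i)
  exact this h

include hg in
theorem g_zpow_ne_one {i : Fin k} {a : ℤ} (ha : a ≠ 0) : (g i) ^ a ≠ 1 := by
  intro h
  exact ha (g_zpow_inj hkm g hg (h.trans (zpow_zero (g i)).symm))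

include hg in
theorem lett_ne_one (p : Fin k × Bool) : (g p.1) ^ (sg p.2) ≠ 1 := by
  apply g_zpow_ne_one hkm g hg
  rcases p with ⟨i, _ | _⟩ <;> simp [sg]

include hφ hg in
theorem mem_range_iff_letters_good (z : Monoid.CoprodI G) :
    z ∈ Set.range φ ↔ ∀ l ∈ letters z, IsGood hkm g l := by
  constructor
  · rintro ⟨u, rfl⟩
    rw [phi_eq_philist hkm g φ hφ]
    generalize FreeGroup.toWord u = L
    induction L with
    | nil => rw [philist_nil, letters_one]; simp
    | cons p L ih =>
      rw [philist_cons]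
      rcases hL : letters (philist hkm g L) with _ | ⟨a, T⟩
      · rw [letters_eq_nil_iff.1 hL, mul_one, lett,
          letters_of _ (lett_ne_one hkm g hg p)]
        rintro l hl
        simp only [List.mem_singleton] at hl
        exact hl ▸ ⟨p.1, sg p.2, rfl⟩
      · obtain ⟨j, c, rfl⟩ := ih a (by rw [hL]; simp)
        by_cases hij : p.1 = j
        · subst hij
          by_cases hcan : (g p.1) ^ (sg p.2) * ((g p.1) ^ c) = 1
          · rw [lett, letters_of_mul_cancel hL hcan]
            exact fun l hl => ih l (by rw [hL]; simp [hl])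
          · rw [lett, letters_of_mul_merge hL hcan]
            rintro l hl
            rcases List.mem_cons.1 hl with rfl | hl
            · exact ⟨p.1, sg p.2 + c, by rw [zpow_add]⟩
            · exact ih l (by rw [hL]; simp [hl])
        · have hne : (Fin.castLE hkm p.1 : Fin m) ≠ Fin.castLE hkm j := fun hcon =>
            hij (Fin.castLE_injective hkm hcon)
          rw [lett, letters_of_mul_prepend (lett_ne_one hkm g hg p)
            (by rw [hL]; rintro b hb; simp only [List.head?_cons, Option.mem_some_iff] at hb;
                rw [← hb]; exact hne)]
          rintro l hl
          rcases List.mem_cons.1 hl with rfl | hl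
          · exact ⟨p.1, sg p.2, rfl⟩
          · exact ih l (by rw [hL, ← hL]; exact hl)
  · intro hgood
    rw [← prod_letters z]
    have : ∀ L : List (Σ i, G i), (∀ l ∈ L, IsGood hkm g l) → listProd L ∈ Set.range φ := by
      intro L
      induction L with
      | nil => intro _; exact ⟨1, by simp [listProd]⟩
      | cons a L ih =>
        intro hL
        obtain ⟨j, c, hjc⟩ := hL a (by simp)
        obtain ⟨u, hu⟩ := ih (fun l hl => hL l (by simp [hl]))
        refine ⟨FreeGroup.of j ^ c * u, ?_⟩
        rw [hjc, map_mul, map_zpow, hφ j, hu]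
        show of (g j) ^ c * listProd L = listProd (⟨Fin.castLE hkm j, (g j) ^ c⟩ :: L)
        rw [← MonoidHom.map_zpow]
        simp [listProd]
    exact this _ hgood

/-- `LC x A`: the word `A` cancels cleanly (letter-exactly, block-exactly) into
the right end of the normal form of `x`. -/
inductive LC : Monoid.CoprodI G → List (Fin k × Bool) → Prop
  | nil (x) : LC x []
  | cons {x : Monoid.CoprodI G} {A : List (Fin k × Bool)} (j : Fin k) (s : Bool) (c : ℤ)
      (T : List (Σ i, G i))
      (hlet : letters x = T ++ [⟨Fin.castLE hkm j, (g j) ^ c⟩])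
      (hsign : c * sg s < 0)
      (h : LC (x * lett hkm g (j, s)) A) : LC x ((j, s) :: A)

/-- `RC y B`: the word `B` cancels cleanly into the left end of the normal form of `y`. -/
inductive RC : Monoid.CoprodI G → List (Fin k × Bool) → Prop
  | nil (y) : RC y []
  | cons {y : Monoid.CoprodI G} {B : List (Fin k × Bool)} (j : Fin k) (s : Bool) (c : ℤ)
      (T : List (Σ i, G i))
      (hlet : letters y = ⟨Fin.castLE hkm j, (g j) ^ c⟩ :: T)
      (hsign : c * sg s < 0)
      (h : RC (lett hkm g (j, s) * y) B) : RC y (B ++ [(j, s)])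

theorem sg_cases (s : Bool) : sg s = 1 ∨ sg s = -1 := by cases s <;> simp [sg]

theorem sign_unique {c : ℤ} {s s' : Bool} (h : c * sg s < 0) (h' : c * sg s' < 0) :
    s = s' := by
  cases s <;> cases s' <;>
    simp only [sg, cond_true, cond_false, mul_one, mul_neg_one] at h h' <;>
    first | rfl | (exfalso; omega)

include hg in
theorem LC_unique {x : Monoid.CoprodI G} {A A' : List (Fin k × Bool)}
    (h : LC hkm g x A) (h' : LC hkm g x A') (hlen : A.length = A'.length) : A = A' := by
  induction h generalizing A' with
  | nil => exact (List.length_eq_zero_iff.1 hlen.symm).symm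
  | cons j s c T hlet hsign hrec ih =>
    cases h' with
    | nil => simp at hlen
    | cons j' s' c' T' hlet' hsign' hrec' =>
      rw [hlet] at hlet'
      have hlast : (⟨Fin.castLE hkm j, (g j) ^ c⟩ : Σ i, G i)
          = ⟨Fin.castLE hkm j', (g j') ^ c'⟩ := by
        have h12 := congrArg List.getLast? hlet'
        rw [List.getLast?_concat, List.getLast?_concat] at h12
        exact Option.some_injective _ h12
      obtain ⟨hj, hval⟩ := Sigma.mk.inj_iff.1 hlast
      have hjj : j = j' := Fin.castLE_injective hkm hj
      subst hjj
      have hcc : c = c' := g_zpow_inj hkm g hg (eq_of_heq hval)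
      subst hcc
      have hss : s = s' := sign_unique hsign hsign'
      subst hss
      rw [ih hrec' (by simpa using hlen)]

include hg in
theorem RC_unique {y : Monoid.CoprodI G} {B B' : List (Fin k × Bool)}
    (h : RC hkm g y B) (h' : RC hkm g y B') (hlen : B.length = B'.length) : B = B' := by
  induction h generalizing B' with
  | nil => exact (List.length_eq_zero_iff.1 hlen.symm).symm
  | cons j s c T hlet hsign hrec ih =>
    cases h' with
    | nil => simp at hlen
    | cons j' s' c' T' hlet' hsign' hrec' =>
      rw [hlet] at hlet'
      have hhead : (⟨Fin.castLE hkm j, (g j) ^ c⟩ : Σ i, G i)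
          = ⟨Fin.castLE hkm j', (g j') ^ c'⟩ := by
        have h12 := congrArg List.head? hlet'
        simpa using h12
      obtain ⟨hj, hval⟩ := Sigma.mk.inj_iff.1 hhead
      have hjj : j = j' := Fin.castLE_injective hkm hj
      subst hjj
      have hcc : c = c' := g_zpow_inj hkm g hg (eq_of_heq hval)
      subst hcc
      have hss : s = s' := sign_unique hsign hsign'
      subst hss
      rw [ih hrec' (by simpa using hlen)]

/-- The block word `(i,±)^{|e|}` representing `g i ^ e`. -/
def blk (i : Fin k) (e : ℤ) : List (Fin k × Bool) := List.replicate e.natAbs (i, decide (0 < e))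

theorem blk_zero (i : Fin k) : blk (k := k) i 0 = [] := rfl

theorem blk_succ {i : Fin k} {e : ℤ} {s : Bool} (he : e ≠ 0) (hs : decide (0 < e) = s) :
    blk i (e + sg s) = (i, s) :: blk i e ∧ (e + sg s).natAbs = e.natAbs + 1 ∧
      blk i (e + sg s) = blk i e ++ [(i, s)] := by
  have : (0 < e ∧ s = true) ∨ (e < 0 ∧ s = false) := by
    rcases lt_trichotomy e 0 with h | h | h
    · right; exact ⟨h, by rw [← hs]; simp [not_lt.2 (le_of_lt h)]⟩
    · exact absurd h he
    · left; exact ⟨h, by rw [← hs]; simp [h]⟩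
  rcases this with ⟨hpos, rfl⟩ | ⟨hneg, rfl⟩
  · have h1 : (e + sg true).natAbs = e.natAbs + 1 := by
      show (e + 1).natAbs = e.natAbs + 1; omega
    have hd1 : decide (0 < e + sg true) = true := by
      show decide (0 < e + 1) = true; simp; omega
    have hd0 : decide (0 < e) = true := by simp; omega
    exact ⟨by rw [blk, blk, h1, hd1, hd0, List.replicate_succ], h1,
      by rw [blk, blk, h1, hd1, hd0, List.replicate_succ']⟩
  · have h1 : (e + sg false).natAbs = e.natAbs + 1 := by
      show (e + -1).natAbs = e.natAbs + 1; omega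
    have hd1 : decide (0 < e + sg false) = false := by
      show decide (0 < e + -1) = false; simp; omega
    have hd0 : decide (0 < e) = false := by simp; omega
    exact ⟨by rw [blk, blk, h1, hd1, hd0, List.replicate_succ], h1,
      by rw [blk, blk, h1, hd1, hd0, List.replicate_succ']⟩

theorem blk_single (j : Fin k) (s : Bool) : blk (k := k) j (sg s) = [(j, s)] := by
  cases s <;> rfl

theorem philist_replicate (i : Fin k) (s : Bool) (n : ℕ) :
    philist hkm g (List.replicate n (i, s)) = of ((g i) ^ ((n : ℤ) * sg s)) := by
  induction n with
  | zero =>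
    rw [List.replicate_zero, philist_nil, show ((0 : ℕ) : ℤ) * sg s = 0 by ring, zpow_zero,
      MonoidHom.map_one]
  | succ n ih =>
    rw [List.replicate_succ, philist_cons, ih, lett, ← MonoidHom.map_mul, ← zpow_add]
    congr 2
    push_cast
    ring

theorem philist_blk (i : Fin k) (e : ℤ) : philist hkm g (blk i e) = of ((g i) ^ e) := by
  rw [blk, philist_replicate]
  congr 2
  rcases lt_trichotomy e 0 with h | h | h
  · have : decide (0 < e) = false := by simp; omega
    rw [this]; simp only [sg, cond_false, mul_neg_one]; omega
  · subst h; simp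
  · have : decide (0 < e) = true := by simp; omega
    rw [this]; simp only [sg, cond_true, mul_one]; omega

theorem sg_mul_self_pos {e : ℤ} (he : e ≠ 0) : 0 < e * sg (decide (0 < e)) := by
  by_cases h : 0 < e
  · rw [decide_eq_true h]; simpa [sg] using h
  · rw [decide_eq_false h]
    simp only [sg, cond_false, mul_neg_one]
    omega

include hg in
theorem RC_blk {i : Fin k} : ∀ (n : ℕ) (e : ℤ), e.natAbs = n → e ≠ 0 →
    ∀ (z : Monoid.CoprodI G) (T : List (Σ i, G i)),
    letters z = ⟨Fin.castLE hkm i, (g i) ^ (-e)⟩ :: T → RC hkm g z (blk i e)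
  | 0 => by intro e he he0; omega
  | (n+1) => by
    intro e he he0 z T hz
    have hsign : (-e) * sg (decide (0 < e)) < 0 := by
      have := sg_mul_self_pos (e := e) he0
      rw [neg_mul]
      linarith
    by_cases h1 : e = sg (decide (0 < e))
    · have h2 : RC hkm g z [(i, decide (0 < e))] :=
        RC.cons i (decide (0 < e)) (-e) T hz hsign (RC.nil _)
      rwa [h1, blk_single]
    · have he' : e - sg (decide (0 < e)) ≠ 0 := fun hc => h1 (by omega)
      have hd : decide (0 < e - sg (decide (0 < e))) = decide (0 < e) := by
        by_cases h : 0 < e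
        · rw [decide_eq_true h, show sg true = 1 from rfl]
          rw [decide_eq_true h, show sg true = 1 from rfl] at h1
          exact decide_eq_true (by omega)
        · rw [decide_eq_false h, show sg false = -1 from rfl]
          rw [decide_eq_false h, show sg false = -1 from rfl] at h1
          exact decide_eq_false (by omega)
      obtain ⟨_, hb2, hb3⟩ := blk_succ (i := i) he' hd
      rw [sub_add_cancel] at hb2 hb3
      rw [hb3]
      have hmerge : (g i) ^ (sg (decide (0 < e))) * (g i) ^ (-e) ≠ 1 := by
        rw [← zpow_add]
        exact g_zpow_ne_one hkm g hg (by intro hc; exact he' (by omega))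
      have hlet' : letters (lett hkm g (i, decide (0 < e)) * z)
          = ⟨Fin.castLE hkm i, (g i) ^ (-(e - sg (decide (0 < e))))⟩ :: T := by
        rw [lett, letters_of_mul_merge hz hmerge, ← zpow_add]
        congr 3
        ring
      exact RC.cons i (decide (0 < e)) (-e) T hz hsign
        (RC_blk n (e - sg (decide (0 < e))) (by omega) he' _ T hlet')

include hg in
theorem RC_fold {y : Monoid.CoprodI G} {B : List (Fin k × Bool)} (h : RC hkm g y B) :
    ∀ (i : Fin k) (e : ℤ), e ≠ 0 → ∀ T,
    letters (philist hkm g B * y) = ⟨Fin.castLE hkm i, (g i) ^ (-e)⟩ :: T →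
    RC hkm g y (blk i e ++ B) := by
  induction h with
  | nil y =>
    intro i e he T hT
    rw [philist_nil, one_mul] at hT
    rw [List.append_nil]
    exact RC_blk hkm g hg e.natAbs e rfl he _ T hT
  | cons j s c T₀ hlet hsign hrec ih =>
    rename_i y₀ B₀
    intro i e he T hT
    have heq : philist hkm g (B₀ ++ [(j, s)]) * y₀
        = philist hkm g B₀ * (lett hkm g (j, s) * y₀) := by
      rw [philist_append, philist_cons, philist_nil, mul_one, mul_assoc]
    rw [heq] at hT
    have := ih i e he T hT
    have h2 := RC.cons j s c T₀ hlet hsign this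
    rwa [List.append_assoc] at h2

theorem range_mul {a b : Monoid.CoprodI G} (ha : a ∈ Set.range φ) (hb : b ∈ Set.range φ) :
    a * b ∈ Set.range φ := by
  obtain ⟨u, rfl⟩ := ha; obtain ⟨v, rfl⟩ := hb; exact ⟨u * v, map_mul φ u v⟩

theorem range_inv {a : Monoid.CoprodI G} (ha : a ∈ Set.range φ) : a⁻¹ ∈ Set.range φ := by
  obtain ⟨u, rfl⟩ := ha; exact ⟨u⁻¹, map_inv φ u⟩

theorem range_one : (1 : Monoid.CoprodI G) ∈ Set.range φ := ⟨1, map_one φ⟩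

theorem ne_one_of_not_range {x : Monoid.CoprodI G} (hx : x ∉ Set.range φ) : x ≠ 1 :=
  fun h => hx (h ▸ range_one φ)

include hφ hg in
theorem junction_pin {x z : Monoid.CoprodI G} {i₀ : Fin m} {h₃ : G i₀}
    {T₃ : List (Σ i, G i)}
    (hxlast : letters x = T₃ ++ [⟨i₀, h₃⟩])
    (hx : x ∉ Set.range φ) (hz : z ≠ 1) (hmem : x * z ∈ Set.range φ) :
    ∃ (h₂ : G i₀) (T₂ : List (Σ i, G i)), letters z = ⟨i₀, h₂⟩ :: T₂ := by
  rcases hzl : letters z with _ | ⟨⟨f₂, h₂⟩, T₂⟩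
  · exact absurd (letters_eq_nil_iff.1 hzl) hz
  by_cases hf : f₂ = i₀
  · subst hf; exact ⟨h₂, T₂, rfl⟩
  · exfalso
    have hconc : letters (x * z) = letters x ++ letters z := by
      apply letters_mul x z
      intro a ha b hb
      rw [hxlast] at ha
      rw [List.getLast?_concat] at ha
      rw [hzl] at hb
      simp only [List.head?_cons, Option.mem_some_iff] at ha hb
      rw [← ha, ← hb]
      exact Ne.symm hf
    have hbad : ∃ l ∈ letters x, ¬ IsGood hkm g l := by
      by_contra hcon
      push_neg at hcon
      exact hx ((mem_range_iff_letters_good hkm g φ hφ hg x).2 hcon)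
    obtain ⟨l, hl, hlbad⟩ := hbad
    exact hlbad ((mem_range_iff_letters_good hkm g φ hφ hg _).1 hmem l
      (by rw [hconc]; exact List.mem_append_left _ hl))

include hφ hg in
theorem xside {x : Monoid.CoprodI G} (hx : x ∉ Set.range φ) (j : Fin k) (s : Bool) :
    (∃ (c : ℤ) (T : List (Σ i, G i)),
        letters x = T ++ [⟨Fin.castLE hkm j, (g j) ^ c⟩] ∧ c * sg s < 0) ∨
    (∃ (h₃ : G (Fin.castLE hkm j)) (T₃ : List (Σ i, G i)),
        letters (x * lett hkm g (j, s)) = T₃ ++ [⟨Fin.castLE hkm j, h₃⟩] ∧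
        ((h₃ = (g j) ^ (sg s) ∧ letters x = T₃) ∨
          letters x = T₃ ++ [⟨Fin.castLE hkm j, h₃ * (g j) ^ (-sg s)⟩])) := by
  rcases List.eq_nil_or_concat (letters x) with hnil | ⟨T, ⟨i₀, h₀⟩, hxl⟩
  · exact absurd (letters_eq_nil_iff.1 hnil) (ne_one_of_not_range φ hx)
  rw [List.concat_eq_append] at hxl
  by_cases hf : i₀ = Fin.castLE hkm j
  · subst hf
    by_cases hex : ∃ c : ℤ, h₀ = (g j) ^ c ∧ c * sg s < 0
    · obtain ⟨c, rfl, hc⟩ := hex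
      exact Or.inl ⟨c, T, hxl, hc⟩
    · right
      have hne : h₀ * (g j) ^ (sg s) ≠ 1 := by
        intro hcon
        apply hex
        refine ⟨-sg s, ?_, ?_⟩
        · rw [zpow_neg]
          exact eq_inv_of_mul_eq_one_left hcon
        · rcases sg_cases s with h | h <;> rw [h] <;> norm_num
      rw [lett]
      refine ⟨h₀ * (g j) ^ (sg s), T, letters_mul_of_merge hxl hne, Or.inr ?_⟩
      rw [hxl]
      congr 3
      group
  · right
    rw [lett]
    refine ⟨(g j) ^ (sg s), letters x, letters_mul_of_append
      (g_zpow_ne_one hkm g hg (by rcases sg_cases s with h | h <;> rw [h] <;> norm_num)) ?_,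
      Or.inl ⟨rfl, rfl⟩⟩
    intro b hb
    rw [hxl, List.getLast?_concat] at hb
    simp only [Option.mem_some_iff] at hb
    subst hb
    simpa using hf

theorem bool_ne_not {d s : Bool} (h : d ≠ !s) : d = s := by
  cases d <;> cases s <;> simp_all

include hφ hg in
theorem core (hk0 : 0 < k) (y : Monoid.CoprodI G) (hy : y ∉ Set.range φ) :
    ∀ (L : List (Fin k × Bool)), L.Chain' (fun a b => b ≠ (a.1, !a.2)) →
    ∀ x : Monoid.CoprodI G, x ∉ Set.range φ →
    x * philist hkm g L * y ∈ Set.range φ →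
    ∃ (A : List (Fin k × Bool)) (i : Fin k) (e : ℤ) (B : List (Fin k × Bool)),
      L = A ++ blk i e ++ B ∧ LC hkm g x A ∧ RC hkm g y B ∧
      (e ≠ 0 → ∃ (h₀ : G (Fin.castLE hkm i)) (T : List (Σ i, G i)),
        letters (philist hkm g B * y) = ⟨Fin.castLE hkm i, h₀⟩ :: T) := by
  intro L
  induction L with
  | nil =>
    intro _ x hx _
    exact ⟨[], ⟨0, hk0⟩, 0, [], rfl, LC.nil _, RC.nil _, fun h => absurd rfl h⟩
  | cons p L' IH =>
    rcases p with ⟨j, s⟩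
    intro hred x hx hmem
    have hred' : L'.Chain' (fun a b => b ≠ (a.1, !a.2)) := hred.tail
    have hhead : ∀ b ∈ L'.head?, b ≠ ((j, s).1, !(j, s).2) := (List.isChain_cons.1 hred).1
    have hlettmem : lett hkm g (j, s) ∈ Set.range φ := lett_mem_range hkm g φ hφ (j, s)
    have hx' : x * lett hkm g (j, s) ∉ Set.range φ := by
      intro hcon
      apply hx
      have := range_mul φ hcon (range_inv φ hlettmem)
      simpa using this
    have hmem' : (x * lett hkm g (j, s)) * philist hkm g L' * y ∈ Set.range φ := by
      rw [philist_cons, ← mul_assoc] at hmem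
      exact hmem
    obtain ⟨A', i, e, B, hL', hLC', hRC', hpin'⟩ := IH hred' _ hx' hmem'
    rcases A' with _ | ⟨⟨j₁, s₁⟩, A₂⟩
    · -- A' = [] : cases B/C/D
      rw [List.nil_append] at hL'
      by_cases hBe : e ≠ 0 ∧ i = j
      · -- Case B : extend the middle block
        obtain ⟨he, rfl⟩ := hBe
        obtain ⟨t, ht⟩ : ∃ t, e.natAbs = t + 1 := ⟨e.natAbs - 1, by omega⟩
        have hblk : blk i e = (i, decide (0 < e)) :: List.replicate t (i, decide (0 < e)) := by
          rw [blk, ht, List.replicate_succ]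
        have hds : decide (0 < e) = s := by
          have h1 : ((i, decide (0 < e)) : Fin k × Bool) ≠ ((i, s).1, !(i, s).2) := by
            apply hhead
            rw [hL', hblk]
            rfl
          exact bool_ne_not (fun hd => h1 (by simp [hd]))
        obtain ⟨hb1, _, _⟩ := blk_succ (i := i) he hds
        refine ⟨[], i, e + sg s, B, ?_, LC.nil _, hRC', fun _ => hpin' he⟩
        rw [List.nil_append, hb1, hL']
        rfl
      · -- Cases C/D
        rcases xside hkm g φ hφ hg hx j s with ⟨c, T, hxl, hc⟩ | ⟨h₃, T₃, hxl', _⟩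
        · -- clean absorption of the first letter into x
          exact ⟨[(j, s)], i, e, B, by rw [hL']; rfl,
            LC.cons j s c T hxl hc (LC.nil _), hRC', hpin'⟩
        · by_cases he : e = 0
          · -- Case C : new singleton middle block, pin via junction
            subst he
            rw [blk_zero, List.nil_append] at hL'
            subst hL'
            have hz1 : philist hkm g L' * y ≠ 1 := by
              intro hcon
              apply hy
              exact (inv_eq_of_mul_eq_one_right hcon) ▸
                range_inv φ (philist_mem_range hkm g φ hφ L')
            have hmem'' : (x * lett hkm g (j, s)) * (philist hkm g L' * y) ∈ Set.range φ := by
              rw [← mul_assoc]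
              exact hmem'
            obtain ⟨h₂, T₂, hz⟩ := junction_pin hkm g φ hφ hg hxl' hx' hz1 hmem''
            refine ⟨[], j, sg s, L', ?_, LC.nil _, hRC', fun _ => ⟨h₂, T₂, hz⟩⟩
            rw [List.nil_append, blk_single]
            rfl
          · -- Case D : e ≠ 0 and i ≠ j
            have hij : i ≠ j := fun hcon => hBe ⟨he, hcon⟩
            obtain ⟨h₀, T₀, hp⟩ := hpin' he
            have hz1 : philist hkm g L' * y ≠ 1 := by
              intro hcon
              apply hy
              exact (inv_eq_of_mul_eq_one_right hcon) ▸
                range_inv φ (philist_mem_range hkm g φ hφ L')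
            have hmem'' : (x * lett hkm g (j, s)) * (philist hkm g L' * y) ∈ Set.range φ := by
              rw [← mul_assoc]
              exact hmem'
            have hLy : philist hkm g L' * y = of ((g i) ^ e) * (philist hkm g B * y) := by
              rw [hL', philist_append, philist_blk hkm g, mul_assoc]
            by_cases hfold : h₀ = (g i) ^ (-e)
            · -- fold the middle block into the clean right part
              subst hfold
              have hRCf : RC hkm g y (blk i e ++ B) := RC_fold hkm g hg hRC' i e he T₀ hp
              have hcanc : letters (philist hkm g (blk i e ++ B) * y) = T₀ := by
                rw [philist_append, philist_blk hkm g, mul_assoc]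
                exact letters_of_mul_cancel hp (by rw [← zpow_add]; simp)
              have hz2 : philist hkm g (blk i e ++ B) * y ≠ 1 := by
                rw [philist_append, philist_blk hkm g, mul_assoc, ← hLy]
                exact hz1
              have hmem''' : (x * lett hkm g (j, s)) *
                  (philist hkm g (blk i e ++ B) * y) ∈ Set.range φ := by
                rw [philist_append, philist_blk hkm g, mul_assoc (of ((g i) ^ e)), ← hLy]
                exact hmem''
              obtain ⟨h₂, T₂, hzz⟩ := junction_pin hkm g φ hφ hg hxl' hx' hz2 hmem'''
              refine ⟨[], j, sg s, blk i e ++ B, ?_, LC.nil _, hRCf, fun _ => ⟨h₂, T₂, hzz⟩⟩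
              rw [List.nil_append, blk_single, hL']
              rfl
            · -- impossible: the head of the rest lies in factor i ≠ j
              exfalso
              have hne1 : (g i) ^ e * h₀ ≠ 1 := by
                intro hcon
                apply hfold
                rw [zpow_neg]
                exact eq_inv_of_mul_eq_one_right hcon
              have hz' : letters (philist hkm g L' * y) = ⟨Fin.castLE hkm i, (g i) ^ e * h₀⟩ :: T₀ := by
                rw [hLy]
                exact letters_of_mul_merge hp hne1
              obtain ⟨h₂, T₂, hzz⟩ := junction_pin hkm g φ hφ hg hxl' hx' hz1 hmem''
              rw [hz'] at hzz
              have : (Fin.castLE hkm i : Fin m) = Fin.castLE hkm j := by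
                have := congrArg (fun l => (List.head? l).map Sigma.fst) hzz
                simpa using this
              exact hij (Fin.castLE_injective hkm this)
    · -- Case A : A' nonempty, prepend the letter to A'
      have hA'head : ((j₁, s₁) : Fin k × Bool) ≠ (j, !s) := by
        apply hhead
        rw [hL']
        rfl
      cases hLC' with
      | cons _ _ c' T' hlet' hsign' hrec' =>
        rcases xside hkm g φ hφ hg hx j s with ⟨c, T, hxl, hc⟩ | ⟨h₃, T₃, hxl', hsub⟩
        · exact ⟨(j, s) :: (j₁, s₁) :: A₂, i, e, B, by rw [hL']; rfl,
            LC.cons j s c T hxl hc (LC.cons j₁ s₁ c' T' hlet' hsign' hrec'), hRC', hpin'⟩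
        · -- compare the two descriptions of the last letter of x * lett (j,s)
          have hcomp : T₃ ++ [(⟨Fin.castLE hkm j, h₃⟩ : Σ i, G i)]
              = T' ++ [⟨Fin.castLE hkm j₁, (g j₁) ^ c'⟩] := hxl'.symm.trans hlet'
          have hlast : (⟨Fin.castLE hkm j, h₃⟩ : Σ i, G i)
              = ⟨Fin.castLE hkm j₁, (g j₁) ^ c'⟩ := by
            have h12 := congrArg List.getLast? hcomp
            rw [List.getLast?_concat, List.getLast?_concat] at h12
            exact Option.some_injective _ h12
          obtain ⟨hj, hval⟩ := Sigma.mk.inj_iff.1 hlast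
          have hjj : j = j₁ := Fin.castLE_injective hkm hj
          subst hjj
          have hss : s₁ = s := by
            apply bool_ne_not
            intro hcon
            exact hA'head (by rw [hcon])
          subst hss
          have hval' : h₃ = (g j) ^ c' := eq_of_heq hval
          rcases hsub with ⟨hap, _⟩ | hmer
          · -- append case: impossible by sign
            exfalso
            have hce : c' = sg s₁ := g_zpow_inj hkm g hg (by rw [← hval', hap])
            rcases sg_cases s₁ with h | h <;> rw [h] at hce hsign' <;> omega
          · -- merge case: build the LC constructor
            have hxfin : letters x = T₃ ++ [⟨Fin.castLE hkm j, (g j) ^ (c' - sg s₁)⟩] := by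
              rw [hmer, hval', ← zpow_add, sub_eq_add_neg]
            have hsg2 : sg s₁ * sg s₁ = 1 := by
              rcases sg_cases s₁ with h | h <;> rw [h] <;> norm_num
            have hcnew : (c' - sg s₁) * sg s₁ < 0 := by
              have : (c' - sg s₁) * sg s₁ = c' * sg s₁ - 1 := by
                rw [sub_mul, hsg2]
              omega
            exact ⟨(j, s₁) :: (j, s₁) :: A₂, i, e, B, by rw [hL']; rfl,
              LC.cons j s₁ (c' - sg s₁) T₃ hxfin hcnew
                (LC.cons j s₁ c' T' hlet' hsign' hrec'), hRC', hpin'⟩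

end Phi

theorem no_cancel_chain {α : Type*} : ∀ (L : List (α × Bool)),
    (∀ (P Q : List (α × Bool)) (a : α) (b : Bool), L ≠ P ++ (a, b) :: (a, !b) :: Q) →
    L.Chain' (fun a b => b ≠ (a.1, !a.2))
  | [] => fun _ => List.isChain_nil
  | [x] => fun _ => List.isChain_singleton x
  | x :: y :: L => by
    intro h
    refine List.isChain_cons_cons.2 ?_
    constructor
    · intro hcon
      exact h [] L x.1 x.2 (by rw [hcon]; rfl)
    · exact no_cancel_chain (y :: L) (fun P Q a b hcon => h (x :: P) Q a b (by rw [hcon]; rfl))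

theorem toWord_isRed {α : Type*} [DecidableEq α] (u : FreeGroup α) :
    (FreeGroup.toWord u).Chain' (fun a b => b ≠ (a.1, !a.2)) := by
  apply no_cancel_chain
  intro P Q a b hcon
  have h2 : FreeGroup.reduce (FreeGroup.toWord u) = P ++ (a, b) :: (a, !b) :: Q := by
    rw [FreeGroup.reduce_toWord]
    exact hcon
  exact FreeGroup.reduce.not h2

end Chi15Aux

open Chi15Aux in
/-- let `G = G_1 * ⋯ * G_m` be a free product of groups (`m ≥ 2`), with
`g_i ∈ G_i` (`1 ≤ i ≤ k`, `2 ≤ k ≤ m`) of infinite order, and let `φ : F_k → G` be the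
(injective) homomorphism sending the `i`-th free generator to the canonical image of
`g_i` in `G`.  If `x, y ∈ G` with `x, y ∉ φ(F_k)`, then for every `n ≥ 0` the set
`χ_n = {u ∈ F_k : |u| = n and x·φ(u)·y ∈ φ(F_k)}` is finite with cardinality at most
`(n+1)(2n+1)`. -/
theorem chi_n_card_le (m : ℕ) (hm : 2 ≤ m) (G : Fin m → Type*) [∀ i, Group (G i)]
    (k : ℕ) (hk : 2 ≤ k) (hkm : k ≤ m)
    (g : (i : Fin k) → G (Fin.castLE hkm i))
    (hg : ∀ i, ¬ IsOfFinOrder (g i))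
    (φ : FreeGroup (Fin k) →* Monoid.CoprodI G)
    (hφ : ∀ i : Fin k, φ (FreeGroup.of i) = Monoid.CoprodI.of (g i))
    (hinj : Function.Injective φ)
    (x y : Monoid.CoprodI G)
    (hx : x ∉ Set.range φ) (hy : y ∉ Set.range φ) (n : ℕ) :
    {u : Fk k | wlen u = n ∧ x * φ u * y ∈ Set.range φ}.Finite ∧
    Nat.card {u : Fk k | wlen u = n ∧ x * φ u * y ∈ Set.range φ} ≤
      (n + 1) * (2 * n + 1) := by
  letI : ∀ i, DecidableEq (G i) := fun i => Classical.decEq (G i)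
  set S := {u : Fk k | wlen u = n ∧ x * φ u * y ∈ Set.range φ} with hS
  have hdata : ∀ t : S, ∃ (A : List (Fin k × Bool)) (i : Fin k) (e : ℤ)
      (B : List (Fin k × Bool)),
      FreeGroup.toWord (t : FreeGroup (Fin k)) = A ++ blk i e ++ B ∧ LC hkm g x A ∧
      RC hkm g y B ∧
      (e ≠ 0 → ∃ (h₀ : G (Fin.castLE hkm i)) (T : List (Σ i, G i)),
        letters (philist hkm g B * y) = ⟨Fin.castLE hkm i, h₀⟩ :: T) := by
    rintro ⟨u, hu1, hu2⟩
    refine core hkm g φ hφ hg (by omega) y hy (FreeGroup.toWord u) (toWord_isRed u) x hx ?_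
    rw [← phi_eq_philist hkm g φ hφ]
    exact hu2
  choose A idx e B hsplit hLC hRC hpin using hdata
  have hlen : ∀ t : S, (A t).length + (e t).natAbs + (B t).length = n := by
    rintro t
    have h1 := congrArg List.length (hsplit t)
    have h2 : (FreeGroup.toWord (t : FreeGroup (Fin k))).length = n := t.2.1
    rw [h2] at h1
    simp only [List.length_append, blk, List.length_replicate] at h1
    omega
  have hFinj : Function.Injective (fun t : S =>
      ((⟨(A t).length, by have := hlen t; omega⟩ : Fin (n + 1)),
       (⟨((e t) + n).toNat, by have := hlen t; omega⟩ : Fin (2 * n + 1)))) := by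
    intro t t' hval
    simp only [Prod.mk.injEq, Fin.mk.injEq] at hval
    obtain ⟨hlA, hle⟩ := hval
    have hee : e t = e t' := by
      have h1 := hlen t
      have h2 := hlen t'
      omega
    have hAA : A t = A t' := LC_unique hkm g hg (hLC t) (hLC t') hlA
    have hBB : B t = B t' := by
      apply RC_unique hkm g hg (hRC t) (hRC t')
      have h1 := hlen t
      have h2 := hlen t'
      omega
    have hblk : blk (idx t) (e t) = blk (idx t') (e t') := by
      by_cases he0 : e t = 0
      · rw [he0, blk_zero]
        rw [← hee, he0, blk_zero]
      · obtain ⟨h₀, T₀, hp⟩ := hpin t he0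
        obtain ⟨h₀', T₀', hp'⟩ := hpin t' (by rw [← hee]; exact he0)
        rw [← hBB] at hp'
        rw [hp] at hp'
        have hidx : idx t = idx t' := by
          have := congrArg (fun l => (List.head? l).map Sigma.fst) hp'
          simpa using this
        rw [hidx, hee]
    apply Subtype.ext
    apply FreeGroup.toWord_injective
    rw [hsplit t, hsplit t', hAA, hBB, hblk]
  have hfin : Finite S := Finite.of_injective _ hFinj
  refine ⟨Set.finite_coe_iff.mp hfin, ?_⟩
  calc Nat.card S ≤ Nat.card (Fin (n + 1) × Fin (2 * n + 1)) :=
        Nat.card_le_card_of_injective _ hFinj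
    _ = (n + 1) * (2 * n + 1) := by simp

end
end
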